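/- arXiv:2403.16773 — 5 statements merged into one kernel-verified Lean document; each statement's English description precedes it below -/
import Mathlib

section
/- The difference of expected β-Hessians of the noisy- and true-covariate negative log-likelihoods at the true parameter is the explicit block-diagonal matrix: E[∂²L*/∂β∂βᵀ (θ0)] − E[∂²L/∂β∂βᵀ (θ0)] = blockdiag(0_{p1×p1}, λx² tr(Ω0⁻¹) I_{p2}). -/
open MeasureTheory ProbabilityTheory Matrix
open scoped Matrix

namespace PSAR

/-- `S(ρ) = I_N − ρ W`. -/
noncomputable def Smat {N : ℕ} (W : Matrix (Fin N) (Fin N) ℝ) (ρ : ℝ) :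
    Matrix (Fin N) (Fin N) ℝ :=
  1 - ρ • W

/-- `Ω(ρ, σ²) = σ² I_N + λ² S(ρ) S(ρ)ᵀ`. -/
noncomputable def Omat {N : ℕ} (W : Matrix (Fin N) (Fin N) ℝ) (lam2 ρ σ2 : ℝ) :
    Matrix (Fin N) (Fin N) ℝ :=
  σ2 • (1 : Matrix (Fin N) (Fin N) ℝ) + lam2 • (Smat W ρ * (Smat W ρ)ᵀ)

/-- `𝕎S(ρ) = W S(ρ)ᵀ + S(ρ) Wᵀ`. -/
noncomputable def WSmat {N : ℕ} (W : Matrix (Fin N) (Fin N) ℝ) (ρ : ℝ) :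
    Matrix (Fin N) (Fin N) ℝ :=
  W * (Smat W ρ)ᵀ + Smat W ρ * Wᵀ

/-- `𝕎(ρ) = Wᵀ S(ρ) + S(ρ)ᵀ W` (least squares version). -/
noncomputable def WLSmat {N : ℕ} (W : Matrix (Fin N) (Fin N) ℝ) (ρ : ℝ) :
    Matrix (Fin N) (Fin N) ℝ :=
  Wᵀ * Smat W ρ + (Smat W ρ)ᵀ * W

/-- The negative log-likelihood
`L(θ) = −log det S(ρ) + (1/2) log det Ω(ρ,σ²) + (1/2)(S(ρ)Ys − Xβ)ᵀ Ω(ρ,σ²)⁻¹ (S(ρ)Ys − Xβ)`. -/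
noncomputable def nll {N p1 p2 : ℕ} (W : Matrix (Fin N) (Fin N) ℝ) (lam2 : ℝ)
    (X : Matrix (Fin N) (Fin p1 ⊕ Fin p2) ℝ) (Ys : Fin N → ℝ)
    (ρ : ℝ) (β : Fin p1 ⊕ Fin p2 → ℝ) (σ2 : ℝ) : ℝ :=
  - Real.log (Smat W ρ).det + (1 / 2) * Real.log (Omat W lam2 ρ σ2).det
    + (1 / 2) * ((Smat W ρ *ᵥ Ys - X *ᵥ β) ⬝ᵥ
        ((Omat W lam2 ρ σ2)⁻¹ *ᵥ (Smat W ρ *ᵥ Ys - X *ᵥ β)))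

/-- Diagonal matrix `d(ρ)` with `d(ρ)_{ii} = 1/(S(ρ)ᵀ S(ρ))_{ii}`. -/
noncomputable def dmat {N : ℕ} (W : Matrix (Fin N) (Fin N) ℝ) (ρ : ℝ) :
    Matrix (Fin N) (Fin N) ℝ :=
  Matrix.diagonal fun i => ((((Smat W ρ)ᵀ * Smat W ρ) i i)⁻¹)

/-- Entrywise first derivative `ḋ(ρ)` of `d(ρ)` in `ρ`. -/
noncomputable def dmatDot {N : ℕ} (W : Matrix (Fin N) (Fin N) ℝ) (ρ : ℝ) :
    Matrix (Fin N) (Fin N) ℝ :=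
  Matrix.diagonal fun i => deriv (fun r => ((((Smat W r)ᵀ * Smat W r) i i)⁻¹)) ρ

/-- Entrywise second derivative `d̈(ρ)` of `d(ρ)` in `ρ`. -/
noncomputable def dmatDDot {N : ℕ} (W : Matrix (Fin N) (Fin N) ℝ) (ρ : ℝ) :
    Matrix (Fin N) (Fin N) ℝ :=
  Matrix.diagonal fun i => deriv (deriv (fun r => ((((Smat W r)ᵀ * Smat W r) i i)⁻¹))) ρ

/-- Least squares objective `L_LS(γ) = ‖d(ρ) S(ρ)ᵀ (S(ρ)Y − Xβ)‖²`. -/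
noncomputable def lsObj {N p1 p2 : ℕ} (W : Matrix (Fin N) (Fin N) ℝ)
    (X : Matrix (Fin N) (Fin p1 ⊕ Fin p2) ℝ) (Y : Fin N → ℝ)
    (ρ : ℝ) (β : Fin p1 ⊕ Fin p2 → ℝ) : ℝ :=
  ((dmat W ρ * (Smat W ρ)ᵀ) *ᵥ (Smat W ρ *ᵥ Y - X *ᵥ β)) ⬝ᵥ
    ((dmat W ρ * (Smat W ρ)ᵀ) *ᵥ (Smat W ρ *ᵥ Y - X *ᵥ β))

/-- Observed response `Y* = S0⁻¹(Xβ0 + E) + ε`. -/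
noncomputable def Yobs {N p1 p2 : ℕ} (W : Matrix (Fin N) (Fin N) ℝ) (ρ0 : ℝ)
    (X : Matrix (Fin N) (Fin p1 ⊕ Fin p2) ℝ) (β0 : Fin p1 ⊕ Fin p2 → ℝ)
    (E ε : Fin N → ℝ) : Fin N → ℝ :=
  (Smat W ρ0)⁻¹ *ᵥ (X *ᵥ β0 + E) + ε

/-- True response `Y = S0⁻¹(Xβ0 + E)`. -/
noncomputable def Ytrue {N p1 p2 : ℕ} (W : Matrix (Fin N) (Fin N) ℝ) (ρ0 : ℝ)
    (X : Matrix (Fin N) (Fin p1 ⊕ Fin p2) ℝ) (β0 : Fin p1 ⊕ Fin p2 → ℝ)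
    (E : Fin N → ℝ) : Fin N → ℝ :=
  (Smat W ρ0)⁻¹ *ᵥ (X *ᵥ β0 + E)

/-- Observed covariates `X* = (X1, X2 + Ex)`. -/
noncomputable def Xobs {N p1 p2 : ℕ} (X : Matrix (Fin N) (Fin p1 ⊕ Fin p2) ℝ)
    (Ex : Fin N → Fin p2 → ℝ) : Matrix (Fin N) (Fin p1 ⊕ Fin p2) ℝ :=
  X + Matrix.of fun i j => Sum.elim (fun _ => (0 : ℝ)) (fun k => Ex i k) j

/-- All the noise entries of `E`, `ε`, `Ex` gathered as a single family. -/
def noiseFam {Ωs : Type*} {N p2 : ℕ} (E ε : Ωs → Fin N → ℝ)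
    (Ex : Ωs → Fin N → Fin p2 → ℝ) :
    (Fin N ⊕ Fin N ⊕ Fin N × Fin p2) → Ωs → ℝ :=
  fun z ω => Sum.elim (fun i => E ω i) (Sum.elim (fun i => ε ω i) (fun q => Ex ω q.1 q.2)) z

lemma deriv_quad (a b c : ℝ) :
    deriv (fun u : ℝ => a + b * u + c * u ^ 2) 0 = b := by
  have h : HasDerivAt (fun u : ℝ => a + b * u + c * u ^ 2)
      (0 + b * 1 + c * ((2:ℕ) * (0:ℝ) ^ (2 - 1))) 0 :=
    ((hasDerivAt_const (0:ℝ) a).add ((hasDerivAt_id (0:ℝ)).const_mul b)).add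
      ((hasDerivAt_pow 2 (0:ℝ)).const_mul c)
  simpa using h.deriv

lemma quad_expand {N : ℕ} (M : Matrix (Fin N) (Fin N) ℝ) (c vj vk : Fin N → ℝ) (t u : ℝ) :
    (c - t • vj - u • vk) ⬝ᵥ (M *ᵥ (c - t • vj - u • vk)) =
      (c ⬝ᵥ (M *ᵥ c) - t * (vj ⬝ᵥ (M *ᵥ c) + c ⬝ᵥ (M *ᵥ vj)) + t ^ 2 * (vj ⬝ᵥ (M *ᵥ vj)))
      + (-(vk ⬝ᵥ (M *ᵥ c) + c ⬝ᵥ (M *ᵥ vk)) + t * (vj ⬝ᵥ (M *ᵥ vk) + vk ⬝ᵥ (M *ᵥ vj))) * u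
      + (vk ⬝ᵥ (M *ᵥ vk)) * u ^ 2 := by
  simp only [Matrix.mulVec_sub, Matrix.mulVec_smul, dotProduct_sub, sub_dotProduct,
    dotProduct_smul, smul_dotProduct, smul_eq_mul]
  ring

lemma hess_eval {N : ℕ} (M : Matrix (Fin N) (Fin N) ℝ) (K : ℝ) (c vj vk : Fin N → ℝ) :
    deriv (fun t : ℝ => deriv (fun u : ℝ =>
        K + (1/2) * ((c - t • vj - u • vk) ⬝ᵥ (M *ᵥ (c - t • vj - u • vk)))) 0) 0
      = (1/2) * (vj ⬝ᵥ (M *ᵥ vk) + vk ⬝ᵥ (M *ᵥ vj)) := by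
  have hin : (fun t : ℝ => deriv (fun u : ℝ =>
      K + (1/2) * ((c - t • vj - u • vk) ⬝ᵥ (M *ᵥ (c - t • vj - u • vk)))) 0)
      = fun t : ℝ =>
        ((1/2) * (-(vk ⬝ᵥ (M *ᵥ c) + c ⬝ᵥ (M *ᵥ vk))))
        + ((1/2) * (vj ⬝ᵥ (M *ᵥ vk) + vk ⬝ᵥ (M *ᵥ vj))) * t + 0 * t ^ 2 := by
    funext t
    have h2 : (fun u : ℝ =>
        K + (1/2) * ((c - t • vj - u • vk) ⬝ᵥ (M *ᵥ (c - t • vj - u • vk))))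
        = fun u : ℝ =>
          (K + (1/2) * (c ⬝ᵥ (M *ᵥ c) - t * (vj ⬝ᵥ (M *ᵥ c) + c ⬝ᵥ (M *ᵥ vj))
            + t ^ 2 * (vj ⬝ᵥ (M *ᵥ vj))))
          + ((1/2) * (-(vk ⬝ᵥ (M *ᵥ c) + c ⬝ᵥ (M *ᵥ vk))
              + t * (vj ⬝ᵥ (M *ᵥ vk) + vk ⬝ᵥ (M *ᵥ vj)))) * u
          + ((1/2) * (vk ⬝ᵥ (M *ᵥ vk))) * u ^ 2 := by
      funext u
      rw [quad_expand]
      ring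
    rw [h2, deriv_quad]
    ring
  rw [hin, deriv_quad]

lemma hess_nll {N p1 p2 : ℕ} (W : Matrix (Fin N) (Fin N) ℝ) (lam2 : ℝ)
    (X : Matrix (Fin N) (Fin p1 ⊕ Fin p2) ℝ) (Ys : Fin N → ℝ) (ρ0 σ02 : ℝ)
    (β0 : Fin p1 ⊕ Fin p2 → ℝ) (j k : Fin p1 ⊕ Fin p2) :
    deriv (fun t : ℝ => deriv (fun u : ℝ =>
        nll W lam2 X Ys ρ0
          (β0 + t • (Pi.single j 1 : (Fin p1 ⊕ Fin p2) → ℝ)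
             + u • (Pi.single k 1 : (Fin p1 ⊕ Fin p2) → ℝ)) σ02) 0) 0
      = (1/2) * ((X *ᵥ Pi.single j 1) ⬝ᵥ ((Omat W lam2 ρ0 σ02)⁻¹ *ᵥ (X *ᵥ Pi.single k 1))
          + (X *ᵥ Pi.single k 1) ⬝ᵥ ((Omat W lam2 ρ0 σ02)⁻¹ *ᵥ (X *ᵥ Pi.single j 1))) := by
  have key : ∀ t u : ℝ,
      nll W lam2 X Ys ρ0
        (β0 + t • (Pi.single j 1 : (Fin p1 ⊕ Fin p2) → ℝ)
           + u • (Pi.single k 1 : (Fin p1 ⊕ Fin p2) → ℝ)) σ02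
      = (- Real.log (Smat W ρ0).det + (1 / 2) * Real.log (Omat W lam2 ρ0 σ02).det)
        + (1/2) * ((((Smat W ρ0 *ᵥ Ys - X *ᵥ β0) - t • (X *ᵥ Pi.single j 1)
              - u • (X *ᵥ Pi.single k 1)) ⬝ᵥ
            ((Omat W lam2 ρ0 σ02)⁻¹ *ᵥ ((Smat W ρ0 *ᵥ Ys - X *ᵥ β0)
              - t • (X *ᵥ Pi.single j 1) - u • (X *ᵥ Pi.single k 1))))) := by
    intro t u
    have hv : Smat W ρ0 *ᵥ Ys - X *ᵥ (β0 + t • (Pi.single j 1 : (Fin p1 ⊕ Fin p2) → ℝ)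
          + u • (Pi.single k 1 : (Fin p1 ⊕ Fin p2) → ℝ))
        = (Smat W ρ0 *ᵥ Ys - X *ᵥ β0) - t • (X *ᵥ Pi.single j 1)
          - u • (X *ᵥ Pi.single k 1) := by
      simp only [Matrix.mulVec_add, Matrix.mulVec_smul]
      abel
    simp only [nll, hv]
  simp only [key]
  exact hess_eval _ _ _ _ _

def zfun {Ωs : Type*} {N p2 : ℕ} (Ex : Ωs → Fin N → Fin p2 → ℝ) {p1 : ℕ}
    (l : Fin p1 ⊕ Fin p2) (ω : Ωs) (a : Fin N) : ℝ :=
  Sum.elim (fun _ => (0:ℝ)) (fun l' => Ex ω a l') l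

@[simp] lemma zfun_inl {Ωs : Type*} {N p2 p1 : ℕ} (Ex : Ωs → Fin N → Fin p2 → ℝ)
    (x : Fin p1) (ω : Ωs) (a : Fin N) : zfun (p1 := p1) Ex (Sum.inl x) ω a = 0 := rfl

@[simp] lemma zfun_inr {Ωs : Type*} {N p2 p1 : ℕ} (Ex : Ωs → Fin N → Fin p2 → ℝ)
    (x : Fin p2) (ω : Ωs) (a : Fin N) :
    zfun (p1 := p1) Ex (Sum.inr x) ω a = Ex ω a x := rfl

lemma sum_cancel {ι : Type*} [Fintype ι] (A B C : ι → ℝ) :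
    (∑ p : ι, ((1/2) * (A p + B p) + C p)) - (1/2) * ((∑ p : ι, A p) + ∑ p : ι, B p)
      = ∑ p : ι, C p := by
  rw [Finset.sum_add_distrib, ← Finset.mul_sum, Finset.sum_add_distrib]
  ring

lemma main_integral {Ωs : Type*} [MeasurableSpace Ωs] (μ : Measure Ωs) [IsProbabilityMeasure μ]
    {N p1 p2 : ℕ} (M : Matrix (Fin N) (Fin N) ℝ) (v : (Fin p1 ⊕ Fin p2) → Fin N → ℝ)
    (Ex : Ωs → Fin N → Fin p2 → ℝ) (lamx2 : ℝ)
    (hL2 : ∀ (a : Fin N) (j' : Fin p2), MemLp (fun ω => Ex ω a j') 2 μ)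
    (hm0 : ∀ (a : Fin N) (j' : Fin p2), ∫ ω, Ex ω a j' ∂μ = 0)
    (hvar : ∀ (a : Fin N) (j' : Fin p2), ∫ ω, (Ex ω a j') ^ 2 ∂μ = lamx2)
    (hcov0 : ∀ (a : Fin N) (j' : Fin p2) (b : Fin N) (k' : Fin p2), (a, j') ≠ (b, k') →
      ∫ ω, Ex ω a j' * Ex ω b k' ∂μ = 0)
    (j k : Fin p1 ⊕ Fin p2) :
    (∫ ω, (1/2) * (((fun a => v j a + zfun Ex j ω a) ⬝ᵥ (M *ᵥ (fun a => v k a + zfun Ex k ω a)))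
        + ((fun a => v k a + zfun Ex k ω a) ⬝ᵥ (M *ᵥ (fun a => v j a + zfun Ex j ω a)))) ∂μ)
      - (1/2) * ((v j ⬝ᵥ (M *ᵥ v k)) + (v k ⬝ᵥ (M *ᵥ v j)))
      = Matrix.fromBlocks 0 0 0 ((lamx2 * M.trace) • (1 : Matrix (Fin p2) (Fin p2) ℝ)) j k := by
  classical
  -- basic L² facts
  have hmul : ∀ (f g : Ωs → ℝ), MemLp f 2 μ → MemLp g 2 μ →
      Integrable (fun ω => f ω * g ω) μ := by
    intro f g hf hg
    have h1 : (1:ENNReal)/1 = 1/2 + 1/2 := by rw [ENNReal.add_halves, div_one]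
    exact ((MemLp.smul hg hf (hpqr := ⟨by rw [inv_one, ENNReal.inv_two_add_inv_two]⟩) : MemLp (f • g) 1 μ)).integrable le_rfl
  have hz2 : ∀ (l : Fin p1 ⊕ Fin p2) (a : Fin N), MemLp (fun ω => zfun Ex l ω a) 2 μ := by
    intro l a
    cases l with
    | inl x => exact memLp_const 0
    | inr x => exact hL2 a x
  have hzint : ∀ (l : Fin p1 ⊕ Fin p2) (a : Fin N), Integrable (fun ω => zfun Ex l ω a) μ :=
    fun l a => (hz2 l a).integrable one_le_two
  have hzmean : ∀ (l : Fin p1 ⊕ Fin p2) (a : Fin N), ∫ ω, zfun Ex l ω a ∂μ = 0 := by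
    intro l a
    cases l with
    | inl x => simp
    | inr x => exact hm0 a x
  have hw2 : ∀ (l : Fin p1 ⊕ Fin p2) (a : Fin N), MemLp (fun ω => v l a + zfun Ex l ω a) 2 μ :=
    fun l a => (memLp_const (v l a)).add (hz2 l a)
  -- covariance of the z's
  set Cz : (Fin p1 ⊕ Fin p2) → (Fin p1 ⊕ Fin p2) → Fin N → Fin N → ℝ :=
    fun l l' a b => ∫ ω, zfun Ex l ω a * zfun Ex l' ω b ∂μ with hCz
  have hCzl : ∀ (x : Fin p1) (l' : Fin p1 ⊕ Fin p2) (a b : Fin N), Cz (Sum.inl x) l' a b = 0 := by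
    intro x l' a b; simp [hCz]
  have hCzr : ∀ (l : Fin p1 ⊕ Fin p2) (x : Fin p1) (a b : Fin N), Cz l (Sum.inl x) a b = 0 := by
    intro l x a b; simp [hCz]
  have hCzrr : ∀ (j' k' : Fin p2) (a b : Fin N),
      Cz (Sum.inr j') (Sum.inr k') a b = if a = b ∧ j' = k' then lamx2 else 0 := by
    intro j' k' a b
    by_cases h : a = b ∧ j' = k'
    · obtain ⟨rfl, rfl⟩ := h
      rw [if_pos ⟨rfl, rfl⟩]
      simp only [hCz]
      rw [show (fun ω => zfun (p1 := p1) Ex (Sum.inr j') ω a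
            * zfun (p1 := p1) Ex (Sum.inr j') ω a)
          = fun ω => (Ex ω a j') ^ 2 from funext fun ω => by simp [sq]]
      exact hvar a j'
    · rw [if_neg h, hCz]
      exact hcov0 a j' b k' (by simpa [Prod.ext_iff] using h)
  -- expansion of the quadratic forms as sums
  have hexp : ∀ x y : Fin N → ℝ, x ⬝ᵥ (M *ᵥ y) = ∑ p : Fin N × Fin N, x p.1 * M p.1 p.2 * y p.2 := by
    intro x y
    rw [Fintype.sum_prod_type]
    simp [dotProduct, Matrix.mulVec, Finset.mul_sum, mul_assoc]
  set F : (Fin N × Fin N) → Ωs → ℝ := fun p ω =>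
    (1/2) * ((v j p.1 + zfun Ex j ω p.1) * M p.1 p.2 * (v k p.2 + zfun Ex k ω p.2)
      + (v k p.1 + zfun Ex k ω p.1) * M p.1 p.2 * (v j p.2 + zfun Ex j ω p.2)) with hF
  have hFint : ∀ p : Fin N × Fin N, Integrable (F p) μ := by
    intro p
    have h1 := hmul _ _ (hw2 j p.1) (hw2 k p.2)
    have h2 := hmul _ _ (hw2 k p.1) (hw2 j p.2)
    have hre : F p = fun ω =>
        (1/2) * (M p.1 p.2 * ((v j p.1 + zfun Ex j ω p.1) * (v k p.2 + zfun Ex k ω p.2))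
          + M p.1 p.2 * ((v k p.1 + zfun Ex k ω p.1) * (v j p.2 + zfun Ex j ω p.2))) := by
      funext ω; simp only [hF]; ring
    rw [hre]
    exact ((h1.const_mul _).add (h2.const_mul _)).const_mul _
  -- expected products
  have hEprod : ∀ (l l' : Fin p1 ⊕ Fin p2) (a b : Fin N),
      ∫ ω, (v l a + zfun Ex l ω a) * (v l' b + zfun Ex l' ω b) ∂μ
        = v l a * v l' b + Cz l l' a b := by
    intro l l' a b
    have intA : Integrable (fun ω => v l a * zfun Ex l' ω b) μ := (hzint l' b).const_mul _
    have intB : Integrable (fun ω => v l' b * zfun Ex l ω a) μ := (hzint l a).const_mul _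
    have intP : Integrable (fun ω => zfun Ex l ω a * zfun Ex l' ω b) μ :=
      hmul _ _ (hz2 l a) (hz2 l' b)
    have hre : (fun ω => (v l a + zfun Ex l ω a) * (v l' b + zfun Ex l' ω b))
        = fun ω => ((v l a * v l' b + (v l a * zfun Ex l' ω b + v l' b * zfun Ex l ω a))
            + zfun Ex l ω a * zfun Ex l' ω b) := by
      funext ω; ring
    have I2 : Integrable (fun ω => v l a * zfun Ex l' ω b + v l' b * zfun Ex l ω a) μ :=
      intA.add intB
    have I1 : Integrable (fun ω =>
        v l a * v l' b + (v l a * zfun Ex l' ω b + v l' b * zfun Ex l ω a)) μ :=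
      (integrable_const _).add I2
    rw [hre, integral_add I1 intP, integral_add (integrable_const _) I2,
      integral_add intA intB,
      integral_const_mul (v l a) (fun ω => zfun Ex l' ω b),
      integral_const_mul (v l' b) (fun ω => zfun Ex l ω a),
      hzmean, hzmean, integral_const]
    simp [hCz, measure_univ]
  -- value of ∫ F p
  have hFval : ∀ p : Fin N × Fin N, ∫ ω, F p ω ∂μ
      = ((1/2) * (v j p.1 * M p.1 p.2 * v k p.2 + v k p.1 * M p.1 p.2 * v j p.2)
        + (1/2) * (M p.1 p.2 * (Cz j k p.1 p.2 + Cz k j p.1 p.2))) := by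
    intro p
    have h1 := hmul _ _ (hw2 j p.1) (hw2 k p.2)
    have h2 := hmul _ _ (hw2 k p.1) (hw2 j p.2)
    have hre : F p = fun ω =>
        ((1/2) * M p.1 p.2) * ((v j p.1 + zfun Ex j ω p.1) * (v k p.2 + zfun Ex k ω p.2))
          + ((1/2) * M p.1 p.2) * ((v k p.1 + zfun Ex k ω p.1) * (v j p.2 + zfun Ex j ω p.2)) := by
      funext ω; simp only [hF]; ring
    rw [hre, integral_add (h1.const_mul _) (h2.const_mul _), integral_const_mul,
      integral_const_mul, hEprod, hEprod]
    ring
  -- rewrite the integrand as a finite sum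
  have hsum : ∀ ω : Ωs,
      (1/2) * (((fun a => v j a + zfun Ex j ω a) ⬝ᵥ (M *ᵥ (fun a => v k a + zfun Ex k ω a)))
        + ((fun a => v k a + zfun Ex k ω a) ⬝ᵥ (M *ᵥ (fun a => v j a + zfun Ex j ω a))))
      = ∑ p : Fin N × Fin N, F p ω := by
    intro ω
    rw [hexp, hexp, ← Finset.sum_add_distrib, Finset.mul_sum]
  rw [show (∫ ω, (1/2) * (((fun a => v j a + zfun Ex j ω a) ⬝ᵥ (M *ᵥ (fun a => v k a + zfun Ex k ω a)))
        + ((fun a => v k a + zfun Ex k ω a) ⬝ᵥ (M *ᵥ (fun a => v j a + zfun Ex j ω a)))) ∂μ)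
      = ∑ p : Fin N × Fin N, ∫ ω, F p ω ∂μ from by
        rw [← integral_finset_sum Finset.univ (fun p _ => hFint p)]
        exact integral_congr_ae (Filter.Eventually.of_forall fun ω => hsum ω)]
  simp only [hFval]
  rw [hexp (v j) (v k), hexp (v k) (v j), sum_cancel]
  -- now evaluate the covariance sum by cases
  cases j with
  | inl j1 =>
    cases k <;> simp [hCzl, hCzr, Matrix.fromBlocks]
  | inr j2 =>
    cases k with
    | inl k1 => simp [hCzl, hCzr, Matrix.fromBlocks]
    | inr k2 =>
      simp only [hCzrr, Matrix.fromBlocks_apply₂₂]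
      by_cases hjk : j2 = k2
      · subst hjk
        have hterm : ∀ p : Fin N × Fin N,
            (1/2) * (M p.1 p.2 * ((if p.1 = p.2 ∧ j2 = j2 then lamx2 else 0)
              + (if p.1 = p.2 ∧ j2 = j2 then lamx2 else 0)))
            = if p.1 = p.2 then lamx2 * M p.1 p.2 else 0 := by
          intro p; by_cases h : p.1 = p.2 <;> simp [h] <;> ring
        rw [Finset.sum_congr rfl fun p _ => hterm p, Fintype.sum_prod_type]
        simp [Finset.sum_ite_eq, Matrix.trace, Matrix.diag, Finset.mul_sum]
      · have hterm : ∀ p : Fin N × Fin N,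
            (1/2) * (M p.1 p.2 * ((if p.1 = p.2 ∧ j2 = k2 then lamx2 else 0)
              + (if p.1 = p.2 ∧ k2 = j2 then lamx2 else 0))) = 0 := by
          intro p
          have h2 : ¬(k2 = j2) := fun h => hjk h.symm
          simp [hjk, h2]
        rw [Finset.sum_congr rfl fun p _ => hterm p]
        simp [Matrix.one_apply, hjk]


theorem statement_4
    {Ωs : Type*} [MeasurableSpace Ωs] (μ : Measure Ωs) [IsProbabilityMeasure μ]
    (N p1 p2 : ℕ) (hN : 0 < N) (hp1 : 0 < p1) (hp2 : 0 < p2)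
    (W : Matrix (Fin N) (Fin N) ℝ) (hW : ∀ i, W i i = 0)
    (X : Matrix (Fin N) (Fin p1 ⊕ Fin p2) ℝ)
    (ρ0 : ℝ) (β0 : Fin p1 ⊕ Fin p2 → ℝ) (σ02 lam2 lamx2 : ℝ)
    (hσ : 0 < σ02) (hlam : 0 < lam2) (hlamx : 0 < lamx2)
    (hS0 : 0 < (Smat W ρ0).det)
    (E ε : Ωs → Fin N → ℝ) (Ex : Ωs → Fin N → Fin p2 → ℝ)
    (hindep : iIndepFun (noiseFam E ε Ex) μ)
    (hmom : ∀ z, MemLp (noiseFam E ε Ex z) 4 μ)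
    (hmean : ∀ z, ∫ ω, noiseFam E ε Ex z ω ∂μ = 0)
    (hEvar : ∀ i, ∫ ω, (E ω i) ^ 2 ∂μ = σ02)
    (hepsvar : ∀ i, ∫ ω, (ε ω i) ^ 2 ∂μ = lam2)
    (hExvar : ∀ i j, ∫ ω, (Ex ω i j) ^ 2 ∂μ = lamx2) :
    ∀ j k : Fin p1 ⊕ Fin p2,
      (∫ ω, deriv (fun t : ℝ => deriv (fun u : ℝ =>
            nll W lam2 (Xobs X (Ex ω)) (Yobs W ρ0 X β0 (E ω) (ε ω)) ρ0
              (β0 + t • (Pi.single j 1 : (Fin p1 ⊕ Fin p2) → ℝ) + u • (Pi.single k 1 : (Fin p1 ⊕ Fin p2) → ℝ)) σ02) 0) 0 ∂μ)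
        - (∫ ω, deriv (fun t : ℝ => deriv (fun u : ℝ =>
            nll W lam2 X (Yobs W ρ0 X β0 (E ω) (ε ω)) ρ0
              (β0 + t • (Pi.single j 1 : (Fin p1 ⊕ Fin p2) → ℝ) + u • (Pi.single k 1 : (Fin p1 ⊕ Fin p2) → ℝ)) σ02) 0) 0 ∂μ)
        = (Matrix.fromBlocks 0 0 0
            ((lamx2 * Matrix.trace (Omat W lam2 ρ0 σ02)⁻¹) • (1 : Matrix (Fin p2) (Fin p2) ℝ)) :
            Matrix (Fin p1 ⊕ Fin p2) (Fin p1 ⊕ Fin p2) ℝ) j k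
  := by
  intro j k
  classical
  have hcol : ∀ (ω : Ωs) (l : Fin p1 ⊕ Fin p2),
      Xobs X (Ex ω) *ᵥ Pi.single l (1:ℝ)
        = fun a => (X *ᵥ Pi.single l 1) a + zfun Ex l ω a := by
    intro ω l
    funext a
    cases l with
    | inl x =>
      simp [Xobs, Matrix.add_mulVec, Matrix.mulVec_single, zfun]
    | inr x =>
      simp [Xobs, Matrix.add_mulVec, Matrix.mulVec_single, zfun]
  have e1 : (∫ ω, deriv (fun t : ℝ => deriv (fun u : ℝ =>
        nll W lam2 (Xobs X (Ex ω)) (Yobs W ρ0 X β0 (E ω) (ε ω)) ρ0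
          (β0 + t • (Pi.single j 1 : (Fin p1 ⊕ Fin p2) → ℝ)
            + u • (Pi.single k 1 : (Fin p1 ⊕ Fin p2) → ℝ)) σ02) 0) 0 ∂μ)
      = ∫ ω, (1/2) * (((fun a => (X *ᵥ Pi.single j 1) a + zfun Ex j ω a) ⬝ᵥ
            ((Omat W lam2 ρ0 σ02)⁻¹ *ᵥ (fun a => (X *ᵥ Pi.single k 1) a + zfun Ex k ω a)))
          + ((fun a => (X *ᵥ Pi.single k 1) a + zfun Ex k ω a) ⬝ᵥ
            ((Omat W lam2 ρ0 σ02)⁻¹ *ᵥ (fun a => (X *ᵥ Pi.single j 1) a + zfun Ex j ω a)))) ∂μ :=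
    integral_congr_ae (Filter.Eventually.of_forall fun ω => by
      beta_reduce
      rw [hess_nll W lam2 (Xobs X (Ex ω)) (Yobs W ρ0 X β0 (E ω) (ε ω)) ρ0 σ02 β0 j k,
        hcol ω j, hcol ω k])
  have e2 : (∫ ω, deriv (fun t : ℝ => deriv (fun u : ℝ =>
        nll W lam2 X (Yobs W ρ0 X β0 (E ω) (ε ω)) ρ0
          (β0 + t • (Pi.single j 1 : (Fin p1 ⊕ Fin p2) → ℝ)
            + u • (Pi.single k 1 : (Fin p1 ⊕ Fin p2) → ℝ)) σ02) 0) 0 ∂μ)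
      = (1/2) * (((X *ᵥ Pi.single j 1) ⬝ᵥ ((Omat W lam2 ρ0 σ02)⁻¹ *ᵥ (X *ᵥ Pi.single k 1)))
          + ((X *ᵥ Pi.single k 1) ⬝ᵥ ((Omat W lam2 ρ0 σ02)⁻¹ *ᵥ (X *ᵥ Pi.single j 1)))) := by
    rw [integral_congr_ae (Filter.Eventually.of_forall fun ω =>
      hess_nll W lam2 X (Yobs W ρ0 X β0 (E ω) (ε ω)) ρ0 σ02 β0 j k), integral_const]
    simp
  rw [e1, e2]
  have hL2 : ∀ (a : Fin N) (j' : Fin p2), MemLp (fun ω => Ex ω a j') 2 μ :=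
    fun a j' => ((hmom (Sum.inr (Sum.inr (a, j')))).mono_exponent (by norm_num))
  have hm0 : ∀ (a : Fin N) (j' : Fin p2), ∫ ω, Ex ω a j' ∂μ = 0 :=
    fun a j' => hmean (Sum.inr (Sum.inr (a, j')))
  have hcov0 : ∀ (a : Fin N) (j' : Fin p2) (b : Fin N) (k' : Fin p2), (a, j') ≠ (b, k') →
      ∫ ω, Ex ω a j' * Ex ω b k' ∂μ = 0 := by
    intro a j' b k' hne
    have hne2 : (Sum.inr (Sum.inr (a, j')) : Fin N ⊕ (Fin N ⊕ Fin N × Fin p2))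
        ≠ Sum.inr (Sum.inr (b, k')) :=
      fun h => hne (Sum.inr_injective (Sum.inr_injective h))
    have h := (hindep.indepFun hne2).integral_fun_mul_eq_mul_integral
      (hmom (Sum.inr (Sum.inr (a, j')))).1 (hmom (Sum.inr (Sum.inr (b, k')))).1
    rw [hmean, hmean, mul_zero] at h
    exact h
  exact main_integral μ ((Omat W lam2 ρ0 σ02)⁻¹) (fun l => X *ᵥ Pi.single l 1) Ex lamx2
    hL2 hm0 (fun a j' => hExvar a j') hcov0 j k


end PSAR
end

section
/- The difference of expected second σ²-derivatives of the noisy- and true-covariate negative log-likelihoods at the true parameter is the explicit scalar: E[∂²L*/∂(σ²)² (θ0)] − E[∂²L/∂(σ²)² (θ0)] = λx² (β02ᵀ β02) tr(Ω0⁻³). -/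
open MeasureTheory ProbabilityTheory Matrix
open scoped Matrix

namespace PSAR

/-! ### Auxiliary analytic lemmas -/

section AuxAnalysis

attribute [local instance] Matrix.linftyOpNormedRing Matrix.linftyOpNormedAlgebra

variable {N : ℕ} {W : Matrix (Fin N) (Fin N) ℝ} {lam2 ρ0 : ℝ}

lemma omat_posDef (hlam : 0 < lam2) {s : ℝ} (hs : 0 < s) :
    (Omat W lam2 ρ0 s).PosDef := by
  have h1 : (s • (1 : Matrix (Fin N) (Fin N) ℝ)).PosDef := by
    rw [Matrix.smul_one_eq_diagonal]
    exact Matrix.posDef_diagonal_iff.mpr fun _ => hs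
  have base : (Smat W ρ0 * (Smat W ρ0)ᵀ).PosSemidef := by
    have h := Matrix.posSemidef_self_mul_conjTranspose (Smat W ρ0)
    rwa [Matrix.conjTranspose_eq_transpose_of_trivial] at h
  have h2 : (lam2 • (Smat W ρ0 * (Smat W ρ0)ᵀ)).PosSemidef := by
    refine ⟨?_, fun x => ?_⟩
    · show (lam2 • (Smat W ρ0 * (Smat W ρ0)ᵀ))ᴴ = lam2 • (Smat W ρ0 * (Smat W ρ0)ᵀ)
      rw [Matrix.conjTranspose_smul, base.1, star_trivial]
    · exact (base.smul hlam.le).2 x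
  exact h1.add_posSemidef h2

/-- The evaluation `M ↦ v ⬝ᵥ M *ᵥ w` as a continuous linear map. -/
noncomputable def quadCLM {N : ℕ} (v w : Fin N → ℝ) :
    Matrix (Fin N) (Fin N) ℝ →L[ℝ] ℝ :=
  LinearMap.toContinuousLinearMap
    { toFun := fun M => v ⬝ᵥ (M *ᵥ w)
      map_add' := fun M1 M2 => by simp [Matrix.add_mulVec]
      map_smul' := fun c M => by simp [Matrix.smul_mulVec] }

@[simp] lemma quadCLM_apply {N : ℕ} (v w : Fin N → ℝ) (M : Matrix (Fin N) (Fin N) ℝ) :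
    quadCLM v w M = v ⬝ᵥ (M *ᵥ w) := rfl

lemma hasDerivAt_omat (s : ℝ) :
    HasDerivAt (fun t => Omat W lam2 ρ0 t) (1 : Matrix (Fin N) (Fin N) ℝ) s := by
  have h1 : HasDerivAt (fun t : ℝ => t • (1 : Matrix (Fin N) (Fin N) ℝ))
      ((1 : ℝ) • (1 : Matrix (Fin N) (Fin N) ℝ)) s := (hasDerivAt_id s).smul_const _
  have h2 := h1.add_const (lam2 • (Smat W ρ0 * (Smat W ρ0)ᵀ))
  simp only [Omat, one_smul] at h2 ⊢
  exact h2

lemma hasDerivAt_omatInv (hlam : 0 < lam2) {s : ℝ} (hs : 0 < s) :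
    HasDerivAt (fun t => (Omat W lam2 ρ0 t)⁻¹)
      (-((Omat W lam2 ρ0 s)⁻¹ * (Omat W lam2 ρ0 s)⁻¹)) s := by
  have hU : IsUnit (Omat W lam2 ρ0 s) := (omat_posDef hlam hs).isUnit
  have hval : (↑hU.unit⁻¹ : Matrix (Fin N) (Fin N) ℝ) = (Omat W lam2 ρ0 s)⁻¹ :=
    ((Ring.inverse_unit hU.unit).symm.trans
      (congrArg Ring.inverse hU.unit_spec)).trans
      (Matrix.nonsing_inv_eq_ringInverse _).symm
  have hcomp := (hasFDerivAt_ringInverse (𝕜 := ℝ) hU.unit).comp_hasDerivAt_of_eq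
      s (hasDerivAt_omat s) hU.unit_spec.symm
  have heq : (Ring.inverse ∘ fun t => Omat W lam2 ρ0 t)
      = fun t => (Omat W lam2 ρ0 t)⁻¹ := by
    funext t; simp [Function.comp, Matrix.nonsing_inv_eq_ringInverse]
  rw [heq] at hcomp
  refine hcomp.congr_deriv ?_
  simp [ContinuousLinearMap.neg_apply, ContinuousLinearMap.mulLeftRight_apply, hval]

lemma hasDerivAt_quad (v w : Fin N → ℝ) (hlam : 0 < lam2) {s : ℝ} (hs : 0 < s) :
    HasDerivAt (fun t => v ⬝ᵥ ((Omat W lam2 ρ0 t)⁻¹ *ᵥ w))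
      (-(v ⬝ᵥ (((Omat W lam2 ρ0 s)⁻¹ * (Omat W lam2 ρ0 s)⁻¹) *ᵥ w))) s := by
  have h := (quadCLM v w).hasFDerivAt.comp_hasDerivAt s
    (hasDerivAt_omatInv (W := W) (ρ0 := ρ0) hlam hs)
  exact h.congr_deriv (by
    show v ⬝ᵥ ((-((Omat W lam2 ρ0 s)⁻¹ * (Omat W lam2 ρ0 s)⁻¹)) *ᵥ w) = _
    simp [Matrix.neg_mulVec, dotProduct_neg])

lemma hasDerivAt_quad2 (v w : Fin N → ℝ) (hlam : 0 < lam2) {s : ℝ} (hs : 0 < s) :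
    HasDerivAt (fun t => -(v ⬝ᵥ (((Omat W lam2 ρ0 t)⁻¹ * (Omat W lam2 ρ0 t)⁻¹) *ᵥ w)))
      (2 * (v ⬝ᵥ (((Omat W lam2 ρ0 s)⁻¹ * (Omat W lam2 ρ0 s)⁻¹ * (Omat W lam2 ρ0 s)⁻¹) *ᵥ w)))
      s := by
  have hG := hasDerivAt_omatInv (W := W) (ρ0 := ρ0) hlam hs
  have hmul := (hG.fun_mul hG).fun_neg
  have h := (quadCLM v w).hasFDerivAt.comp_hasDerivAt s hmul
  have hfun : ((quadCLM v w) ∘ fun t => -((Omat W lam2 ρ0 t)⁻¹ * (Omat W lam2 ρ0 t)⁻¹))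
      = fun t => -(v ⬝ᵥ (((Omat W lam2 ρ0 t)⁻¹ * (Omat W lam2 ρ0 t)⁻¹) *ᵥ w)) := by
    funext t; simp [Function.comp, Matrix.neg_mulVec, dotProduct_neg]
  rw [hfun] at h
  refine h.congr_deriv ?_
  change (v ⬝ᵥ (_ *ᵥ w)) = _
  simp only [map_neg, neg_mul, mul_neg, neg_add, neg_neg, quadCLM_apply,
    Matrix.add_mulVec, dotProduct_add, ← mul_assoc, Matrix.neg_mulVec, dotProduct_neg]
  ring

lemma deriv2_quad (v w : Fin N → ℝ) (hlam : 0 < lam2) {σ02 : ℝ} (hσ : 0 < σ02) :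
    deriv (deriv (fun t => v ⬝ᵥ ((Omat W lam2 ρ0 t)⁻¹ *ᵥ w))) σ02
      = 2 * (v ⬝ᵥ (((Omat W lam2 ρ0 σ02)⁻¹ * (Omat W lam2 ρ0 σ02)⁻¹ *
          (Omat W lam2 ρ0 σ02)⁻¹) *ᵥ w)) := by
  have hEq : deriv (fun t => v ⬝ᵥ ((Omat W lam2 ρ0 t)⁻¹ *ᵥ w))
      =ᶠ[nhds σ02]
        fun t => -(v ⬝ᵥ (((Omat W lam2 ρ0 t)⁻¹ * (Omat W lam2 ρ0 t)⁻¹) *ᵥ w)) :=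
    Filter.eventuallyEq_of_mem (Ioi_mem_nhds hσ) fun t ht =>
      (hasDerivAt_quad v w hlam ht).deriv
  rw [hEq.deriv_eq]
  exact (hasDerivAt_quad2 v w hlam hσ).deriv

lemma contDiff_omat_det :
    ContDiff ℝ 2 (fun s : ℝ => (Omat W lam2 ρ0 s).det) := by
  have h : (fun s : ℝ => (Omat W lam2 ρ0 s).det)
      = fun s => ∑ σ : Equiv.Perm (Fin N),
          ((Equiv.Perm.sign σ : ℤ) : ℝ) *
            ∏ i, ((1 : Matrix (Fin N) (Fin N) ℝ) (σ i) i * s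
              + (lam2 • (Smat W ρ0 * (Smat W ρ0)ᵀ)) (σ i) i) := by
    funext s
    rw [Matrix.det_apply]
    refine Finset.sum_congr rfl fun σ _ => ?_
    rw [Units.smul_def, zsmul_eq_mul]
    congr 1
    refine Finset.prod_congr rfl fun i _ => ?_
    simp [Omat, Matrix.add_apply, Matrix.smul_apply, smul_eq_mul, mul_comm]
  rw [h]
  refine ContDiff.sum fun σ _ => ContDiff.mul contDiff_const ?_
  exact contDiff_prod fun i _ =>
    ((contDiff_const.mul contDiff_id).add contDiff_const)

lemma contDiffOn_logdet (hlam : 0 < lam2) :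
    ContDiffOn ℝ 2 (fun s : ℝ => -Real.log (Smat W ρ0).det
        + 1 / 2 * Real.log (Omat W lam2 ρ0 s).det) (Set.Ioi (0 : ℝ)) := by
  refine ContDiffOn.add contDiffOn_const (ContDiffOn.mul contDiffOn_const ?_)
  intro s hs
  have hne : (Omat W lam2 ρ0 s).det ≠ 0 :=
    ne_of_gt (omat_posDef hlam (Set.mem_Ioi.mp hs)).det_pos
  exact ((Real.contDiffAt_log.mpr hne).comp s
    (contDiff_omat_det (W := W)).contDiffAt).contDiffWithinAt

lemma second_deriv_add' {F f g : ℝ → ℝ} {x : ℝ} (hF : F = fun y => f y + g y)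
    (hf : ∀ᶠ y in nhds x, DifferentiableAt ℝ f y)
    (hg : ∀ᶠ y in nhds x, DifferentiableAt ℝ g y)
    (hf' : DifferentiableAt ℝ (deriv f) x) (hg' : DifferentiableAt ℝ (deriv g) x) :
    deriv (deriv F) x = deriv (deriv f) x + deriv (deriv g) x := by
  subst hF
  have h1 : deriv (fun y => f y + g y) =ᶠ[nhds x] fun y => deriv f y + deriv g y := by
    filter_upwards [hf, hg] with y hfy hgy using deriv_add hfy hgy
  rw [h1.deriv_eq, deriv_fun_add hf' hg']

lemma second_deriv_nll {p1 p2 : ℕ} (hlam : 0 < lam2) {σ02 : ℝ} (hσ : 0 < σ02)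
    (X' : Matrix (Fin N) (Fin p1 ⊕ Fin p2) ℝ) (Ys : Fin N → ℝ)
    (β0 : Fin p1 ⊕ Fin p2 → ℝ) :
    deriv (deriv (fun s => nll W lam2 X' Ys ρ0 β0 s)) σ02
      = deriv (deriv (fun s : ℝ => -Real.log (Smat W ρ0).det
            + 1 / 2 * Real.log (Omat W lam2 ρ0 s).det)) σ02
        + (Smat W ρ0 *ᵥ Ys - X' *ᵥ β0) ⬝ᵥ
            (((Omat W lam2 ρ0 σ02)⁻¹ * (Omat W lam2 ρ0 σ02)⁻¹ * (Omat W lam2 ρ0 σ02)⁻¹) *ᵥ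
              (Smat W ρ0 *ᵥ Ys - X' *ᵥ β0)) := by
  set v : Fin N → ℝ := Smat W ρ0 *ᵥ Ys - X' *ᵥ β0 with hv
  have hF : (fun s => nll W lam2 X' Ys ρ0 β0 s)
      = fun s => (-Real.log (Smat W ρ0).det + 1 / 2 * Real.log (Omat W lam2 ρ0 s).det)
          + (((1 : ℝ)/2) • v) ⬝ᵥ ((Omat W lam2 ρ0 s)⁻¹ *ᵥ v) := by
    funext s
    simp only [nll, smul_dotProduct, smul_eq_mul, ← hv, add_assoc]
  have hgOn := contDiffOn_logdet (W := W) (ρ0 := ρ0) hlam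
  have hgev : ∀ᶠ y in nhds σ02, DifferentiableAt ℝ
      (fun s : ℝ => -Real.log (Smat W ρ0).det
        + 1 / 2 * Real.log (Omat W lam2 ρ0 s).det) y := by
    filter_upwards [Ioi_mem_nhds hσ] with y hy
    exact (hgOn.differentiableOn (by norm_num)).differentiableAt (isOpen_Ioi.mem_nhds hy)
  have hg' : DifferentiableAt ℝ (deriv (fun s : ℝ => -Real.log (Smat W ρ0).det
      + 1 / 2 * Real.log (Omat W lam2 ρ0 s).det)) σ02 := by
    have h2 : ContDiffOn ℝ 1 (deriv (fun s : ℝ => -Real.log (Smat W ρ0).det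
        + 1 / 2 * Real.log (Omat W lam2 ρ0 s).det)) (Set.Ioi (0 : ℝ)) :=
      hgOn.deriv_of_isOpen isOpen_Ioi (by norm_num)
    exact (h2.differentiableOn (by norm_num)).differentiableAt
      (isOpen_Ioi.mem_nhds (Set.mem_Ioi.mpr hσ))
  have hhev : ∀ᶠ y in nhds σ02, DifferentiableAt ℝ
      (fun s => (((1 : ℝ)/2) • v) ⬝ᵥ ((Omat W lam2 ρ0 s)⁻¹ *ᵥ v)) y := by
    filter_upwards [Ioi_mem_nhds hσ] with y hy
    exact (hasDerivAt_quad _ _ hlam hy).differentiableAt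
  have hEqd : deriv (fun s => (((1 : ℝ)/2) • v) ⬝ᵥ ((Omat W lam2 ρ0 s)⁻¹ *ᵥ v))
      =ᶠ[nhds σ02] fun t => -((((1 : ℝ)/2) • v) ⬝ᵥ
          (((Omat W lam2 ρ0 t)⁻¹ * (Omat W lam2 ρ0 t)⁻¹) *ᵥ v)) :=
    Filter.eventuallyEq_of_mem (Ioi_mem_nhds hσ) fun t ht =>
      (hasDerivAt_quad _ _ hlam ht).deriv
  have hh' : DifferentiableAt ℝ
      (deriv (fun s => (((1 : ℝ)/2) • v) ⬝ᵥ ((Omat W lam2 ρ0 s)⁻¹ *ᵥ v))) σ02 :=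
    (hEqd.differentiableAt_iff).mpr (hasDerivAt_quad2 _ _ hlam hσ).differentiableAt
  rw [second_deriv_add' hF hgev hhev hg' hh']
  congr 1
  rw [deriv2_quad _ _ hlam hσ, smul_dotProduct, smul_eq_mul]
  ring

end AuxAnalysis

/-! ### Auxiliary probabilistic lemmas -/

section AuxProb

open scoped ENNReal

variable {Ωs : Type*} [MeasurableSpace Ωs] {μ : Measure Ωs} [IsProbabilityMeasure μ]
variable {ι : Type*} [Fintype ι] {η : ι → Ωs → ℝ}

lemma integrable_mul_L2 {f g : Ωs → ℝ} (hf : MemLp f 2 μ) (hg : MemLp g 2 μ) :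
    Integrable (fun ω => f ω * g ω) μ := by
  have h : (1 : ℝ≥0∞)/1 = 1/2 + 1/2 := by
    rw [one_div, one_div, ENNReal.inv_two_add_inv_two, inv_one]
  have h2 : MemLp (f • g) 1 μ := MemLp.smul hg hf (hpqr := ⟨by rw [inv_one, ENNReal.inv_two_add_inv_two]⟩)
  rw [memLp_one_iff_integrable] at h2
  exact h2

lemma memL2_lin (hmom : ∀ z, MemLp (η z) 4 μ) (c : ι → ℝ) :
    MemLp (fun ω => ∑ z, c z * η z ω) 2 μ := by
  refine memLp_finsetSum Finset.univ fun z _ => ?_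
  exact ((hmom z).mono_exponent (by norm_num)).const_mul _

lemma integrable_lin_mul_lin (hmom : ∀ z, MemLp (η z) 4 μ) (c d : ι → ℝ) :
    Integrable (fun ω => (∑ z, c z * η z ω) * (∑ z, d z * η z ω)) μ :=
  integrable_mul_L2 (memL2_lin hmom c) (memL2_lin hmom d)

lemma integral_lin_mul_lin [DecidableEq ι]
    (hindep : iIndepFun η μ)
    (hmom : ∀ z, MemLp (η z) 4 μ) (hmean : ∀ z, ∫ ω, η z ω ∂μ = 0)
    (c d : ι → ℝ) :
    ∫ ω, (∑ z, c z * η z ω) * (∑ z, d z * η z ω) ∂μ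
      = ∑ z, c z * d z * ∫ ω, (η z ω) ^ 2 ∂μ := by
  have hL2 : ∀ z, MemLp (η z) 2 μ := fun z => (hmom z).mono_exponent (by norm_num)
  have hmul : ∀ z w, Integrable (fun ω => η z ω * η w ω) μ := fun z w =>
    integrable_mul_L2 (hL2 z) (hL2 w)
  have hpt : (fun ω => (∑ z, c z * η z ω) * (∑ z, d z * η z ω))
      = fun ω => ∑ z, ∑ w, c z * d w * (η z ω * η w ω) := by
    funext ω
    rw [Finset.sum_mul_sum]
    exact Finset.sum_congr rfl fun z _ => Finset.sum_congr rfl fun w _ => by ring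
  rw [hpt, integral_finset_sum _ fun z _ =>
    integrable_finset_sum _ fun w _ => (hmul z w).const_mul _]
  refine Finset.sum_congr rfl fun z _ => ?_
  rw [integral_finset_sum _ fun w _ => (hmul z w).const_mul _]
  refine (Finset.sum_eq_single z (fun w _ hw => ?_)
    (fun h => absurd (Finset.mem_univ z) h)).trans ?_
  · rw [integral_const_mul]
    have hzw : z ≠ w := fun h => hw h.symm
    have h2 : ∫ ω, η z ω * η w ω ∂μ = (∫ ω, η z ω ∂μ) * ∫ ω, η w ω ∂μ :=
      IndepFun.integral_fun_mul_eq_mul_integral (hindep.indepFun hzw)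
        (hmom z).aestronglyMeasurable (hmom w).aestronglyMeasurable
    rw [h2, hmean z, hmean w]
    ring
  · rw [integral_const_mul]
    simp only [pow_two]

lemma integrable_quad_sum {n : ℕ} (hmom : ∀ z, MemLp (η z) 4 μ)
    (M : Matrix (Fin n) (Fin n) ℝ) (c : Fin n → ι → ℝ) :
    Integrable (fun ω => ∑ i, ∑ j,
      M i j * ((∑ z, c i z * η z ω) * (∑ z, c j z * η z ω))) μ :=
  integrable_finset_sum _ fun i _ => integrable_finset_sum _ fun j _ =>
    ((integrable_lin_mul_lin hmom _ _).const_mul _)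

lemma integral_quad_sum [DecidableEq ι] {n : ℕ}
    (hindep : iIndepFun η μ)
    (hmom : ∀ z, MemLp (η z) 4 μ) (hmean : ∀ z, ∫ ω, η z ω ∂μ = 0)
    (M : Matrix (Fin n) (Fin n) ℝ) (c : Fin n → ι → ℝ) :
    ∫ ω, ∑ i, ∑ j, M i j * ((∑ z, c i z * η z ω) * (∑ z, c j z * η z ω)) ∂μ
      = ∑ i, ∑ j, M i j * ∑ z, c i z * c j z * ∫ ω, (η z ω) ^ 2 ∂μ := by
  rw [integral_finset_sum _ fun i _ => integrable_finset_sum _ fun j _ =>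
    (integrable_lin_mul_lin hmom (c i) (c j)).const_mul (M i j)]
  refine Finset.sum_congr rfl fun i _ => ?_
  rw [integral_finset_sum _ fun j _ => (integrable_lin_mul_lin hmom (c i) (c j)).const_mul (M i j)]
  refine Finset.sum_congr rfl fun j _ => ?_
  rw [integral_const_mul, integral_lin_mul_lin hindep hmom hmean]

end AuxProb

lemma quad_expand_s6 {n : ℕ} (M : Matrix (Fin n) (Fin n) ℝ) (v : Fin n → ℝ) :
    v ⬝ᵥ (M *ᵥ v) = ∑ i, ∑ j, M i j * (v i * v j) := by
  simp only [dotProduct, Matrix.mulVec, Finset.mul_sum]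
  exact Finset.sum_congr rfl fun i _ => Finset.sum_congr rfl fun j _ => by ring

/-- Coefficients of the residual `S₀ Y* − X β₀` as a linear combination of the noise. -/
noncomputable def coefA {N : ℕ} (p2 : ℕ) (W : Matrix (Fin N) (Fin N) ℝ) (ρ0 : ℝ)
    (i : Fin N) : (Fin N ⊕ Fin N ⊕ Fin N × Fin p2) → ℝ :=
  Sum.elim (fun i' => if i' = i then 1 else 0)
    (Sum.elim (fun m => Smat W ρ0 i m) fun _ => 0)

/-- Coefficients of `(Ex β₀₂)ᵢ` as a linear combination of the noise. -/
noncomputable def coefB {N p1 p2 : ℕ} (β0 : Fin p1 ⊕ Fin p2 → ℝ) (i : Fin N) :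
    (Fin N ⊕ Fin N ⊕ Fin N × Fin p2) → ℝ :=
  Sum.elim (fun _ => 0)
    (Sum.elim (fun _ => 0) fun q => if q.1 = i then β0 (Sum.inr q.2) else 0)

lemma lin_coefA {Ωs : Type*} {N p1 p2 : ℕ} (W : Matrix (Fin N) (Fin N) ℝ) (ρ0 : ℝ)
    (X : Matrix (Fin N) (Fin p1 ⊕ Fin p2) ℝ) (β0 : Fin p1 ⊕ Fin p2 → ℝ)
    (hdet : IsUnit (Smat W ρ0).det)
    (E ε : Ωs → Fin N → ℝ) (Ex : Ωs → Fin N → Fin p2 → ℝ) (ω : Ωs) (i : Fin N) :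
    (Smat W ρ0 *ᵥ Yobs W ρ0 X β0 (E ω) (ε ω) - X *ᵥ β0) i
      = ∑ z, coefA p2 W ρ0 i z * noiseFam E ε Ex z ω := by
  have hSY : Smat W ρ0 *ᵥ Yobs W ρ0 X β0 (E ω) (ε ω)
      = X *ᵥ β0 + (E ω + Smat W ρ0 *ᵥ ε ω) := by
    unfold Yobs
    rw [Matrix.mulVec_add, Matrix.mulVec_mulVec, Matrix.mul_nonsing_inv _ hdet,
      Matrix.one_mulVec, add_assoc]
  rw [hSY]
  simp only [coefA, noiseFam, Fintype.sum_sum_type, Sum.elim_inl, Sum.elim_inr,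
    ite_mul, one_mul, zero_mul, Finset.sum_ite_eq', Finset.mem_univ, if_true,
    Finset.sum_const_zero, add_zero]
  simp [Matrix.mulVec, dotProduct]

lemma lin_coefB {Ωs : Type*} {N p1 p2 : ℕ} (W : Matrix (Fin N) (Fin N) ℝ) (ρ0 : ℝ)
    (X : Matrix (Fin N) (Fin p1 ⊕ Fin p2) ℝ) (β0 : Fin p1 ⊕ Fin p2 → ℝ)
    (hdet : IsUnit (Smat W ρ0).det)
    (E ε : Ωs → Fin N → ℝ) (Ex : Ωs → Fin N → Fin p2 → ℝ) (ω : Ωs) (i : Fin N) :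
    (Smat W ρ0 *ᵥ Yobs W ρ0 X β0 (E ω) (ε ω) - Xobs X (Ex ω) *ᵥ β0) i
      = ∑ z, (coefA p2 W ρ0 i z - coefB β0 i z) * noiseFam E ε Ex z ω := by
  have h1 : ∀ z, (coefA p2 W ρ0 i z - coefB β0 i z) * noiseFam E ε Ex z ω
      = coefA p2 W ρ0 i z * noiseFam E ε Ex z ω
        - coefB β0 i z * noiseFam E ε Ex z ω := fun z => sub_mul _ _ _
  rw [Finset.sum_congr rfl fun z _ => h1 z, Finset.sum_sub_distrib,
    ← lin_coefA W ρ0 X β0 hdet E ε Ex ω i]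
  have h2 : ∑ z, coefB β0 i z * noiseFam E ε Ex z ω
      = ∑ k, β0 (Sum.inr k) * Ex ω i k := by
    simp only [coefB, noiseFam, Fintype.sum_sum_type, Sum.elim_inl, Sum.elim_inr,
      zero_mul, Finset.sum_const_zero, zero_add, Fintype.sum_prod_type, ite_mul]
    rw [Finset.sum_comm]
    simp [Finset.sum_ite_eq']
  rw [h2]
  have h3 : Xobs X (Ex ω) *ᵥ β0
      = X *ᵥ β0 + fun i' => ∑ k, β0 (Sum.inr k) * Ex ω i' k := by
    unfold Xobs
    rw [Matrix.add_mulVec]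
    congr 1
    funext i'
    simp [Matrix.mulVec, dotProduct, Fintype.sum_sum_type, mul_comm]
  rw [h3]
  simp only [Pi.sub_apply, Pi.add_apply]
  ring

lemma final_sum {N : ℕ} {ι : Type*} [Fintype ι]
    (M : Matrix (Fin N) (Fin N) ℝ) (cA cB : Fin N → ι → ℝ) (V : ι → ℝ) (lamx2 B : ℝ)
    (hkey : ∀ i j, (∑ z, (cA i z - cB i z) * (cA j z - cB j z) * V z)
        - (∑ z, cA i z * cA j z * V z) = if i = j then lamx2 * B else 0) :
    (∑ i, ∑ j, M i j * ∑ z, (cA i z - cB i z) * (cA j z - cB j z) * V z)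
      - (∑ i, ∑ j, M i j * ∑ z, cA i z * cA j z * V z)
      = lamx2 * B * Matrix.trace M := by
  rw [← Finset.sum_sub_distrib]
  have h1 : ∀ i : Fin N,
      (∑ j, M i j * ∑ z, (cA i z - cB i z) * (cA j z - cB j z) * V z)
        - (∑ j, M i j * ∑ z, cA i z * cA j z * V z) = M i i * (lamx2 * B) := by
    intro i
    rw [← Finset.sum_sub_distrib]
    have h2 : ∀ j, M i j * (∑ z, (cA i z - cB i z) * (cA j z - cB j z) * V z)
        - M i j * (∑ z, cA i z * cA j z * V z)
        = if i = j then M i j * (lamx2 * B) else 0 := by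
      intro j
      rw [← mul_sub, hkey i j]
      by_cases h : i = j <;> simp [h]
    rw [Finset.sum_congr rfl fun j _ => h2 j, Finset.sum_ite_eq,
      if_pos (Finset.mem_univ i)]
  rw [Finset.sum_congr rfl fun i _ => h1 i, Matrix.trace, ← Finset.sum_mul]
  simp only [Matrix.diag_apply]
  ring

theorem statement_6
    {Ωs : Type*} [MeasurableSpace Ωs] (μ : Measure Ωs) [IsProbabilityMeasure μ]
    (N p1 p2 : ℕ) (hN : 0 < N) (hp1 : 0 < p1) (hp2 : 0 < p2)
    (W : Matrix (Fin N) (Fin N) ℝ) (hW : ∀ i, W i i = 0)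
    (X : Matrix (Fin N) (Fin p1 ⊕ Fin p2) ℝ)
    (ρ0 : ℝ) (β0 : Fin p1 ⊕ Fin p2 → ℝ) (σ02 lam2 lamx2 : ℝ)
    (hσ : 0 < σ02) (hlam : 0 < lam2) (hlamx : 0 < lamx2)
    (hS0 : 0 < (Smat W ρ0).det)
    (E ε : Ωs → Fin N → ℝ) (Ex : Ωs → Fin N → Fin p2 → ℝ)
    (hindep : iIndepFun (noiseFam E ε Ex) μ)
    (hmom : ∀ z, MemLp (noiseFam E ε Ex z) 4 μ)
    (hmean : ∀ z, ∫ ω, noiseFam E ε Ex z ω ∂μ = 0)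
    (hEvar : ∀ i, ∫ ω, (E ω i) ^ 2 ∂μ = σ02)
    (hepsvar : ∀ i, ∫ ω, (ε ω i) ^ 2 ∂μ = lam2)
    (hExvar : ∀ i j, ∫ ω, (Ex ω i j) ^ 2 ∂μ = lamx2) :
    (∫ ω, deriv (deriv (fun s =>
          nll W lam2 (Xobs X (Ex ω)) (Yobs W ρ0 X β0 (E ω) (ε ω)) ρ0 β0 s)) σ02 ∂μ)
      - (∫ ω, deriv (deriv (fun s =>
          nll W lam2 X (Yobs W ρ0 X β0 (E ω) (ε ω)) ρ0 β0 s)) σ02 ∂μ)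
      = lamx2 * (∑ k, β0 (Sum.inr k) ^ 2) *
          Matrix.trace ((Omat W lam2 ρ0 σ02)⁻¹ * (Omat W lam2 ρ0 σ02)⁻¹ *
            (Omat W lam2 ρ0 σ02)⁻¹)
  := by
  classical
  have hdetS0 : IsUnit (Smat W ρ0).det := hS0.ne'.isUnit
  set c0 : ℝ := deriv (deriv (fun s : ℝ => -Real.log (Smat W ρ0).det
      + 1 / 2 * Real.log (Omat W lam2 ρ0 s).det)) σ02 with hc0
  have hstar : (fun ω => deriv (deriv (fun s =>
        nll W lam2 (Xobs X (Ex ω)) (Yobs W ρ0 X β0 (E ω) (ε ω)) ρ0 β0 s)) σ02)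
      = fun ω => c0 + ∑ i, ∑ j,
          ((Omat W lam2 ρ0 σ02)⁻¹ * (Omat W lam2 ρ0 σ02)⁻¹ * (Omat W lam2 ρ0 σ02)⁻¹) i j *
          ((∑ z, (coefA p2 W ρ0 i z - coefB β0 i z) * noiseFam E ε Ex z ω) *
           (∑ z, (coefA p2 W ρ0 j z - coefB β0 j z) * noiseFam E ε Ex z ω)) := by
    funext ω
    rw [second_deriv_nll hlam hσ, quad_expand_s6]
    congr 1
    exact Finset.sum_congr rfl fun i _ => Finset.sum_congr rfl fun j _ => by
      rw [lin_coefB W ρ0 X β0 hdetS0 E ε Ex ω i, lin_coefB W ρ0 X β0 hdetS0 E ε Ex ω j]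
  have hplain : (fun ω => deriv (deriv (fun s =>
        nll W lam2 X (Yobs W ρ0 X β0 (E ω) (ε ω)) ρ0 β0 s)) σ02)
      = fun ω => c0 + ∑ i, ∑ j,
          ((Omat W lam2 ρ0 σ02)⁻¹ * (Omat W lam2 ρ0 σ02)⁻¹ * (Omat W lam2 ρ0 σ02)⁻¹) i j *
          ((∑ z, coefA p2 W ρ0 i z * noiseFam E ε Ex z ω) *
           (∑ z, coefA p2 W ρ0 j z * noiseFam E ε Ex z ω)) := by
    funext ω
    rw [second_deriv_nll hlam hσ, quad_expand_s6]
    congr 1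
    exact Finset.sum_congr rfl fun i _ => Finset.sum_congr rfl fun j _ => by
      rw [lin_coefA W ρ0 X β0 hdetS0 E ε Ex ω i, lin_coefA W ρ0 X β0 hdetS0 E ε Ex ω j]
  have hVx : ∀ (x : Fin N) (k : Fin p2),
      (∫ ω, (noiseFam E ε Ex (Sum.inr (Sum.inr (x, k))) ω) ^ 2 ∂μ) = lamx2 :=
    fun x k => hExvar x k
  have hkey : ∀ i j : Fin N,
      (∑ z, (coefA p2 W ρ0 i z - coefB β0 i z) * (coefA p2 W ρ0 j z - coefB β0 j z)
          * ∫ ω, (noiseFam E ε Ex z ω) ^ 2 ∂μ)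
        - (∑ z, coefA p2 W ρ0 i z * coefA p2 W ρ0 j z * ∫ ω, (noiseFam E ε Ex z ω) ^ 2 ∂μ)
      = if i = j then lamx2 * ∑ k, β0 (Sum.inr k) ^ 2 else 0 := by
    intro i j
    rw [← Finset.sum_sub_distrib]
    have hterm : ∀ z, (coefA p2 W ρ0 i z - coefB β0 i z) * (coefA p2 W ρ0 j z - coefB β0 j z)
          * (∫ ω, (noiseFam E ε Ex z ω) ^ 2 ∂μ)
        - coefA p2 W ρ0 i z * coefA p2 W ρ0 j z * (∫ ω, (noiseFam E ε Ex z ω) ^ 2 ∂μ)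
        = coefB β0 i z * coefB β0 j z * (∫ ω, (noiseFam E ε Ex z ω) ^ 2 ∂μ) := by
      intro z
      have hab : coefA p2 W ρ0 i z * coefB β0 j z = 0 := by
        rcases z with z | z | z <;> simp [coefA, coefB]
      have hba : coefB β0 i z * coefA p2 W ρ0 j z = 0 := by
        rcases z with z | z | z <;> simp [coefA, coefB]
      have hexp : (coefA p2 W ρ0 i z - coefB β0 i z) * (coefA p2 W ρ0 j z - coefB β0 j z)
            * (∫ ω, (noiseFam E ε Ex z ω) ^ 2 ∂μ)
          - coefA p2 W ρ0 i z * coefA p2 W ρ0 j z * (∫ ω, (noiseFam E ε Ex z ω) ^ 2 ∂μ)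
          = coefB β0 i z * coefB β0 j z * (∫ ω, (noiseFam E ε Ex z ω) ^ 2 ∂μ)
            - (coefA p2 W ρ0 i z * coefB β0 j z) * (∫ ω, (noiseFam E ε Ex z ω) ^ 2 ∂μ)
            - (coefB β0 i z * coefA p2 W ρ0 j z)
              * (∫ ω, (noiseFam E ε Ex z ω) ^ 2 ∂μ) := by ring
      rw [hexp, hab, hba]
      ring
    rw [Finset.sum_congr rfl fun z _ => hterm z]
    simp only [coefB, Fintype.sum_sum_type, Sum.elim_inl, Sum.elim_inr, zero_mul,
      Finset.sum_const_zero, zero_add, Fintype.sum_prod_type]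
    by_cases hij : i = j
    · subst hij
      rw [if_pos rfl]
      rw [Finset.sum_eq_single i (fun x _ hx => Finset.sum_eq_zero fun k _ => by
          simp [hx]) (fun h => absurd (Finset.mem_univ i) h)]
      rw [Finset.mul_sum]
      refine Finset.sum_congr rfl fun k _ => ?_
      rw [hVx i k]
      simp [pow_two]
      ring
    · rw [if_neg hij]
      refine Finset.sum_eq_zero fun x _ => Finset.sum_eq_zero fun k _ => ?_
      by_cases hx : x = i
      · subst hx
        simp [hij]
      · simp [hx]
  rw [hstar, hplain,
    integral_add (integrable_const _) (integrable_quad_sum hmom _ _),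
    integral_add (integrable_const _) (integrable_quad_sum hmom _ _),
    integral_quad_sum hindep hmom hmean, integral_quad_sum hindep hmom hmean,
    integral_const]
  simp only [measure_univ, probReal_univ, ENNReal.toReal_one, one_smul]
  rw [add_sub_add_left_eq_sub]
  exact final_sum _ (fun i z => coefA p2 W ρ0 i z) (fun i z => coefB β0 i z)
    (fun z => ∫ ω, (noiseFam E ε Ex z ω) ^ 2 ∂μ) lamx2 _ hkey

end PSAR
end

section
/- The difference of expected mixed (ρ, β) second derivatives of the noisy- and true-covariate negative log-likelihoods at the true parameter is the explicit vector: E[∂²L*/∂ρ∂β (θ0)] − E[∂²L/∂ρ∂β (θ0)] = (0_{p1}ᵀ, λ² λx² tr(Ω0⁻² 𝕎S0) β02ᵀ)ᵀ ∈ ℝ^p. -/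
open MeasureTheory ProbabilityTheory Matrix
open scoped Matrix

namespace PSAR

/-! ### Auxiliary calculus lemmas -/

section CalcAux
variable {N : ℕ} (W : Matrix (Fin N) (Fin N) ℝ) (lam2 σ02 : ℝ)

lemma hasDerivAt_Smat_entry (i k : Fin N) (ρ : ℝ) :
    HasDerivAt (fun r => Smat W r i k) (-(W i k)) ρ := by
  have h : (fun r => Smat W r i k)
      = fun r : ℝ => (1 : Matrix (Fin N) (Fin N) ℝ) i k - r * W i k := by
    funext r; simp [Smat, Matrix.sub_apply, Matrix.smul_apply, smul_eq_mul]
  rw [h]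
  simpa using (hasDerivAt_const ρ ((1 : Matrix (Fin N) (Fin N) ℝ) i k)).fun_sub
    ((hasDerivAt_id ρ).mul_const (W i k))

lemma hasDerivAt_Omat_entry (i k : Fin N) (ρ0 : ℝ) :
    HasDerivAt (fun r => Omat W lam2 r σ02 i k)
      ((-(lam2 • WSmat W ρ0)) i k) ρ0 := by
  have h : (fun r => Omat W lam2 r σ02 i k)
      = fun r : ℝ => σ02 * (1 : Matrix (Fin N) (Fin N) ℝ) i k
          + lam2 * ∑ l, Smat W r i l * Smat W r k l := by
    funext r
    simp [Omat, Matrix.add_apply, Matrix.smul_apply, smul_eq_mul, Matrix.mul_apply,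
      Matrix.transpose_apply]
  rw [h]
  have h2 : HasDerivAt (fun r : ℝ => ∑ l, Smat W r i l * Smat W r k l)
      (∑ l, (-(W i l) * Smat W ρ0 k l + Smat W ρ0 i l * -(W k l))) ρ0 :=
    HasDerivAt.fun_sum fun l _ =>
      (hasDerivAt_Smat_entry W i l ρ0).fun_mul (hasDerivAt_Smat_entry W k l ρ0)
  have h3 := (hasDerivAt_const ρ0 (σ02 * (1 : Matrix (Fin N) (Fin N) ℝ) i k)).fun_add
    (h2.const_mul lam2)
  refine h3.congr_deriv ?_
  simp only [WSmat, Matrix.neg_apply, Matrix.smul_apply, Matrix.add_apply, Matrix.mul_apply,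
    Matrix.transpose_apply, smul_eq_mul, zero_add]
  rw [Finset.sum_add_distrib]
  simp only [neg_mul, mul_neg, Finset.sum_neg_distrib]
  ring

lemma Omat_posDef (hσ : 0 < σ02) (hlam : 0 < lam2) (ρ : ℝ) :
    (Omat W lam2 ρ σ02).PosDef := by
  refine Matrix.posDef_iff_dotProduct_mulVec.2 ⟨?_, ?_⟩
  · have h1 : (Smat W ρ * (Smat W ρ)ᵀ).IsHermitian := by
      rw [← Matrix.conjTranspose_eq_transpose_of_trivial]
      exact Matrix.isHermitian_mul_conjTranspose_self _
    have h2 : ((1 : Matrix (Fin N) (Fin N) ℝ)).IsHermitian := Matrix.isHermitian_one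
    unfold Omat
    unfold Matrix.IsHermitian at *
    rw [Matrix.conjTranspose_add, Matrix.conjTranspose_smul, Matrix.conjTranspose_smul,
      h1, h2]
    simp [star_trivial]
  · intro x hx
    have hx2 : 0 < dotProduct x x := by
      have hnn : 0 ≤ dotProduct x x :=
        Finset.sum_nonneg fun i _ => mul_self_nonneg (x i)
      rcases lt_or_eq_of_le hnn with h | h
      · exact h
      · exact absurd (dotProduct_self_eq_zero.mp h.symm) hx
    have hsx : star x = x := funext fun i => star_trivial _
    rw [hsx]
    have key : x ⬝ᵥ ((Smat W ρ * (Smat W ρ)ᵀ) *ᵥ x)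
        = ((Smat W ρ)ᵀ *ᵥ x) ⬝ᵥ ((Smat W ρ)ᵀ *ᵥ x) := by
      rw [← Matrix.mulVec_mulVec, Matrix.dotProduct_mulVec, ← Matrix.vecMul_transpose,
        Matrix.transpose_transpose]
    have expand : x ⬝ᵥ (Omat W lam2 ρ σ02 *ᵥ x)
        = σ02 * (x ⬝ᵥ x) + lam2 * (((Smat W ρ)ᵀ *ᵥ x) ⬝ᵥ ((Smat W ρ)ᵀ *ᵥ x)) := by
      rw [Omat, Matrix.add_mulVec, dotProduct_add, Matrix.smul_mulVec,
        Matrix.smul_mulVec, Matrix.one_mulVec, dotProduct_smul,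
        dotProduct_smul, smul_eq_mul, smul_eq_mul, key]
    rw [expand]
    exact add_pos_of_pos_of_nonneg (mul_pos hσ hx2)
      (mul_nonneg hlam.le (Finset.sum_nonneg fun i _ => mul_self_nonneg _))

lemma Omat_det_ne (hσ : 0 < σ02) (hlam : 0 < lam2) (ρ : ℝ) :
    (Omat W lam2 ρ σ02).det ≠ 0 :=
  (Omat_posDef W lam2 σ02 hσ hlam ρ).det_pos.ne'

lemma Omat_isUnit_det (hσ : 0 < σ02) (hlam : 0 < lam2) (ρ : ℝ) :
    IsUnit (Omat W lam2 ρ σ02).det :=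
  isUnit_iff_ne_zero.2 (Omat_det_ne W lam2 σ02 hσ hlam ρ)

lemma differentiableAt_det_comp {n : ℕ} {A : ℝ → Matrix (Fin n) (Fin n) ℝ} {x : ℝ}
    (h : ∀ i k, DifferentiableAt ℝ (fun ρ => A ρ i k) x) :
    DifferentiableAt ℝ (fun ρ => (A ρ).det) x := by
  have hfun : (fun ρ => (A ρ).det)
      = fun ρ => ∑ σ : Equiv.Perm (Fin n),
          ((Equiv.Perm.sign σ : ℤ) : ℝ) * ∏ i, A ρ (σ i) i := by
    funext ρ; rw [Matrix.det_apply]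
    exact Finset.sum_congr rfl fun σ _ => by simp [Units.smul_def, zsmul_eq_mul]
  rw [hfun]
  refine DifferentiableAt.fun_sum fun σ _ => DifferentiableAt.const_mul ?_ _
  exact (HasDerivAt.fun_finsetProd fun i _ => (h (σ i) i).hasDerivAt).differentiableAt

lemma differentiableAt_Omat_inv_entry (hσ : 0 < σ02) (hlam : 0 < lam2)
    (i k : Fin N) (ρ0 : ℝ) :
    DifferentiableAt ℝ (fun ρ => (Omat W lam2 ρ σ02)⁻¹ i k) ρ0 := by
  have hΩd : ∀ i k, DifferentiableAt ℝ (fun ρ => Omat W lam2 ρ σ02 i k) ρ0 :=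
    fun i k => (hasDerivAt_Omat_entry W lam2 σ02 i k ρ0).differentiableAt
  have hfun : (fun ρ => (Omat W lam2 ρ σ02)⁻¹ i k)
      = fun ρ => ((Omat W lam2 ρ σ02).det)⁻¹ * (Omat W lam2 ρ σ02).adjugate i k := by
    funext ρ
    rw [Matrix.inv_def, Matrix.smul_apply, Ring.inverse_eq_inv', smul_eq_mul]
  rw [hfun]
  refine DifferentiableAt.mul (DifferentiableAt.inv (differentiableAt_det_comp hΩd)
    (Omat_det_ne W lam2 σ02 hσ hlam ρ0)) ?_
  have hadj : (fun ρ => (Omat W lam2 ρ σ02).adjugate i k)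
      = fun ρ => ((Omat W lam2 ρ σ02).updateRow k (Pi.single i 1)).det := by
    funext ρ; rw [Matrix.adjugate_apply]
  rw [hadj]
  refine differentiableAt_det_comp fun i' k' => ?_
  rcases eq_or_ne i' k with h | h
  · simp only [Matrix.updateRow_apply, h, if_true]
    exact differentiableAt_const _
  · simp only [Matrix.updateRow_apply, h, if_false]
    exact hΩd i' k'

lemma hasDerivAt_Omat_inv_entry (hσ : 0 < σ02) (hlam : 0 < lam2) (ρ0 : ℝ) (i k : Fin N) :
    HasDerivAt (fun ρ => (Omat W lam2 ρ σ02)⁻¹ i k)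
      ((lam2 • ((Omat W lam2 ρ0 σ02)⁻¹ * WSmat W ρ0 * (Omat W lam2 ρ0 σ02)⁻¹)) i k) ρ0 := by
  classical
  set M : ℝ → Matrix (Fin N) (Fin N) ℝ := fun ρ => (Omat W lam2 ρ σ02)⁻¹ with hM
  set D : Matrix (Fin N) (Fin N) ℝ :=
    Matrix.of (fun i k => deriv (fun ρ => M ρ i k) ρ0) with hD
  have hdiff : ∀ i k, HasDerivAt (fun ρ => M ρ i k) (D i k) ρ0 := fun i k =>
    (differentiableAt_Omat_inv_entry W lam2 σ02 hσ hlam i k ρ0).hasDerivAt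
  have hMul : ∀ i k, (fun ρ => ∑ j, M ρ i j * Omat W lam2 ρ σ02 j k)
      = fun _ => (1 : Matrix (Fin N) (Fin N) ℝ) i k := by
    intro i k; funext ρ
    have := Matrix.nonsing_inv_mul _ (Omat_isUnit_det W lam2 σ02 hσ hlam ρ)
    calc ∑ j, M ρ i j * Omat W lam2 ρ σ02 j k
        = (M ρ * Omat W lam2 ρ σ02) i k := (Matrix.mul_apply).symm
      _ = (1 : Matrix (Fin N) (Fin N) ℝ) i k := by rw [this]
  have hsum : ∀ i k,
      (∑ j, (D i j * Omat W lam2 ρ0 σ02 j k + M ρ0 i j * (-(lam2 • WSmat W ρ0)) j k)) = 0 := by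
    intro i k
    have h1 : HasDerivAt (fun ρ => ∑ j, M ρ i j * Omat W lam2 ρ σ02 j k)
        (∑ j, (D i j * Omat W lam2 ρ0 σ02 j k + M ρ0 i j * (-(lam2 • WSmat W ρ0)) j k)) ρ0 :=
      HasDerivAt.fun_sum fun j _ => (hdiff i j).fun_mul (hasDerivAt_Omat_entry W lam2 σ02 j k ρ0)
    have h2 : HasDerivAt (fun ρ => ∑ j, M ρ i j * Omat W lam2 ρ σ02 j k) 0 ρ0 := by
      rw [hMul i k]; exact hasDerivAt_const _ _
    exact h1.unique h2
  have hmat : D * Omat W lam2 ρ0 σ02 = lam2 • (M ρ0 * WSmat W ρ0) := by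
    ext i k
    have := hsum i k
    rw [Finset.sum_add_distrib] at this
    have h3 : (D * Omat W lam2 ρ0 σ02) i k
        = - ∑ j, M ρ0 i j * (-(lam2 • WSmat W ρ0)) j k := by
      rw [Matrix.mul_apply]; linarith [this]
    rw [h3]
    simp only [Matrix.neg_apply, Matrix.smul_apply, smul_eq_mul, mul_neg,
      Finset.sum_neg_distrib, neg_neg, Matrix.mul_apply, Finset.mul_sum]
    exact Finset.sum_congr rfl fun j _ => by ring
  have hfinal : D = lam2 • (M ρ0 * WSmat W ρ0 * M ρ0) := by
    have hinv := Matrix.mul_nonsing_inv _ (Omat_isUnit_det W lam2 σ02 hσ hlam ρ0)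
    calc D = D * (Omat W lam2 ρ0 σ02 * (Omat W lam2 ρ0 σ02)⁻¹) := by rw [hinv, mul_one]
      _ = D * Omat W lam2 ρ0 σ02 * (Omat W lam2 ρ0 σ02)⁻¹ := by rw [mul_assoc]
      _ = lam2 • (M ρ0 * WSmat W ρ0) * (Omat W lam2 ρ0 σ02)⁻¹ := by rw [hmat]
      _ = lam2 • (M ρ0 * WSmat W ρ0 * M ρ0) := by rw [Matrix.smul_mul]
  have := hdiff i k
  rwa [show D i k = (lam2 • ((Omat W lam2 ρ0 σ02)⁻¹ * WSmat W ρ0 * (Omat W lam2 ρ0 σ02)⁻¹)) i k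
    from by rw [hfinal]] at this

end CalcAux

section DerivAux
variable {N p1 p2 : ℕ} (W : Matrix (Fin N) (Fin N) ℝ) (lam2 σ02 : ℝ)

/-- Value of the mixed second derivative of `nll` at `(ρ0, β0)`. -/
noncomputable def Vform (X' : Matrix (Fin N) (Fin p1 ⊕ Fin p2) ℝ) (Ys : Fin N → ℝ)
    (ρ0 : ℝ) (b : Fin p1 ⊕ Fin p2 → ℝ) (j : Fin p1 ⊕ Fin p2) : ℝ :=
  -(1/2) * ((X' *ᵥ Pi.single j 1) ⬝ᵥ
      ((lam2 • ((Omat W lam2 ρ0 σ02)⁻¹ * WSmat W ρ0 * (Omat W lam2 ρ0 σ02)⁻¹)) *ᵥ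
        (Smat W ρ0 *ᵥ Ys - X' *ᵥ b))
    + (X' *ᵥ Pi.single j 1) ⬝ᵥ ((Omat W lam2 ρ0 σ02)⁻¹ *ᵥ (-(W *ᵥ Ys)))
    + (-(W *ᵥ Ys)) ⬝ᵥ ((Omat W lam2 ρ0 σ02)⁻¹ *ᵥ (X' *ᵥ Pi.single j 1))
    + (Smat W ρ0 *ᵥ Ys - X' *ᵥ b) ⬝ᵥ
        ((lam2 • ((Omat W lam2 ρ0 σ02)⁻¹ * WSmat W ρ0 * (Omat W lam2 ρ0 σ02)⁻¹)) *ᵥ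
          (X' *ᵥ Pi.single j 1)))

lemma innerDeriv (X' : Matrix (Fin N) (Fin p1 ⊕ Fin p2) ℝ) (Ys : Fin N → ℝ)
    (ρ : ℝ) (b : Fin p1 ⊕ Fin p2 → ℝ) (j : Fin p1 ⊕ Fin p2) :
    deriv (fun t : ℝ => nll W lam2 X' Ys ρ (b + t • (Pi.single j 1 : (Fin p1 ⊕ Fin p2) → ℝ)) σ02) 0
      = -(1/2) * ((X' *ᵥ Pi.single j 1) ⬝ᵥ ((Omat W lam2 ρ σ02)⁻¹ *ᵥ (Smat W ρ *ᵥ Ys - X' *ᵥ b))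
          + (Smat W ρ *ᵥ Ys - X' *ᵥ b) ⬝ᵥ ((Omat W lam2 ρ σ02)⁻¹ *ᵥ (X' *ᵥ Pi.single j 1))) := by
  set M := (Omat W lam2 ρ σ02)⁻¹ with hMdef
  set r := Smat W ρ *ᵥ Ys - X' *ᵥ b with hrdef
  set u := X' *ᵥ (Pi.single j 1 : (Fin p1 ⊕ Fin p2) → ℝ) with hudef
  have hq : (fun t : ℝ => nll W lam2 X' Ys ρ (b + t • (Pi.single j 1 : (Fin p1 ⊕ Fin p2) → ℝ)) σ02)
      = fun t : ℝ =>
        (- Real.log (Smat W ρ).det + (1 / 2) * Real.log (Omat W lam2 ρ σ02).det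
          + (1/2) * (r ⬝ᵥ (M *ᵥ r)))
        + (-(1/2) * (u ⬝ᵥ (M *ᵥ r) + r ⬝ᵥ (M *ᵥ u))) * t
        + ((1/2) * (u ⬝ᵥ (M *ᵥ u))) * t ^ 2 := by
    funext t
    have hsub : Smat W ρ *ᵥ Ys - X' *ᵥ (b + t • (Pi.single j 1 : (Fin p1 ⊕ Fin p2) → ℝ))
        = r - t • u := by
      rw [Matrix.mulVec_add, Matrix.mulVec_smul, hrdef]
      abel
    rw [nll, hsub]
    have hexp : (r - t • u) ⬝ᵥ (M *ᵥ (r - t • u))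
        = r ⬝ᵥ (M *ᵥ r) - t * (u ⬝ᵥ (M *ᵥ r) + r ⬝ᵥ (M *ᵥ u)) + t ^ 2 * (u ⬝ᵥ (M *ᵥ u)) := by
      rw [Matrix.mulVec_sub, Matrix.mulVec_smul, sub_dotProduct, dotProduct_sub,
        dotProduct_sub, smul_dotProduct, dotProduct_smul,
        dotProduct_smul, smul_dotProduct]
      simp only [smul_eq_mul]
      ring
    rw [hexp]; ring
  rw [hq]
  have h1 : HasDerivAt (fun t : ℝ =>
      (- Real.log (Smat W ρ).det + (1 / 2) * Real.log (Omat W lam2 ρ σ02).det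
          + (1/2) * (r ⬝ᵥ (M *ᵥ r)))
        + (-(1/2) * (u ⬝ᵥ (M *ᵥ r) + r ⬝ᵥ (M *ᵥ u))) * t
        + ((1/2) * (u ⬝ᵥ (M *ᵥ u))) * t ^ 2)
      (-(1/2) * (u ⬝ᵥ (M *ᵥ r) + r ⬝ᵥ (M *ᵥ u))) 0 := by
    have ha := hasDerivAt_const (0:ℝ)
      (- Real.log (Smat W ρ).det + (1 / 2) * Real.log (Omat W lam2 ρ σ02).det
          + (1/2) * (r ⬝ᵥ (M *ᵥ r)))
    have hb := (hasDerivAt_id (0:ℝ)).const_mul (-(1/2) * (u ⬝ᵥ (M *ᵥ r) + r ⬝ᵥ (M *ᵥ u)))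
    have hc := (hasDerivAt_pow 2 (0:ℝ)).const_mul ((1/2) * (u ⬝ᵥ (M *ᵥ u)))
    have := (ha.fun_add hb).fun_add hc
    simpa using this
  rw [h1.deriv]

lemma hasDerivAt_resid (X' : Matrix (Fin N) (Fin p1 ⊕ Fin p2) ℝ) (Ys : Fin N → ℝ)
    (b : Fin p1 ⊕ Fin p2 → ℝ) (ρ0 : ℝ) (k : Fin N) :
    HasDerivAt (fun ρ => (Smat W ρ *ᵥ Ys - X' *ᵥ b) k) ((-(W *ᵥ Ys)) k) ρ0 := by
  have hfun : (fun ρ => (Smat W ρ *ᵥ Ys - X' *ᵥ b) k)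
      = fun ρ => (∑ l, Smat W ρ k l * Ys l) - (X' *ᵥ b) k := by
    funext ρ; simp [Matrix.mulVec, dotProduct]
  rw [hfun]
  have h := (HasDerivAt.fun_sum fun l (_ : l ∈ Finset.univ) =>
    (hasDerivAt_Smat_entry W k l ρ0).mul_const (Ys l)).sub_const ((X' *ᵥ b) k)
  refine h.congr_deriv ?_
  simp [Matrix.mulVec, dotProduct, neg_mul, Finset.sum_neg_distrib]

lemma outerDerivHasDerivAt (hσ : 0 < σ02) (hlam : 0 < lam2)
    (X' : Matrix (Fin N) (Fin p1 ⊕ Fin p2) ℝ) (Ys : Fin N → ℝ)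
    (b : Fin p1 ⊕ Fin p2 → ℝ) (j : Fin p1 ⊕ Fin p2) (ρ0 : ℝ) :
    HasDerivAt (fun ρ => -(1/2) * ((X' *ᵥ Pi.single j 1) ⬝ᵥ
          ((Omat W lam2 ρ σ02)⁻¹ *ᵥ (Smat W ρ *ᵥ Ys - X' *ᵥ b))
        + (Smat W ρ *ᵥ Ys - X' *ᵥ b) ⬝ᵥ ((Omat W lam2 ρ σ02)⁻¹ *ᵥ (X' *ᵥ Pi.single j 1))))
      (Vform W lam2 σ02 X' Ys ρ0 b j) ρ0 := by
  set u := X' *ᵥ (Pi.single j 1 : (Fin p1 ⊕ Fin p2) → ℝ) with hu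
  set M0 := (Omat W lam2 ρ0 σ02)⁻¹ with hM0
  set Md := (lam2 • ((Omat W lam2 ρ0 σ02)⁻¹ * WSmat W ρ0 * (Omat W lam2 ρ0 σ02)⁻¹)) with hMd
  set r0 := Smat W ρ0 *ᵥ Ys - X' *ᵥ b with hr0
  set rd := -(W *ᵥ Ys) with hrd
  have hT1 : HasDerivAt (fun ρ => u ⬝ᵥ ((Omat W lam2 ρ σ02)⁻¹ *ᵥ (Smat W ρ *ᵥ Ys - X' *ᵥ b)))
      (∑ i, u i * (∑ k, (Md i k * r0 k + M0 i k * rd k))) ρ0 := by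
    have hfun : (fun ρ => u ⬝ᵥ ((Omat W lam2 ρ σ02)⁻¹ *ᵥ (Smat W ρ *ᵥ Ys - X' *ᵥ b)))
        = fun ρ => ∑ i, u i * (∑ k, (Omat W lam2 ρ σ02)⁻¹ i k * (Smat W ρ *ᵥ Ys - X' *ᵥ b) k) := by
      funext ρ; simp [dotProduct, Matrix.mulVec]
    rw [hfun]
    exact HasDerivAt.fun_sum fun i _ => ((HasDerivAt.fun_sum fun k _ =>
      (hasDerivAt_Omat_inv_entry W lam2 σ02 hσ hlam ρ0 i k).fun_mul
        (hasDerivAt_resid W X' Ys b ρ0 k)).const_mul (u i))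
  have hT2 : HasDerivAt (fun ρ => (Smat W ρ *ᵥ Ys - X' *ᵥ b) ⬝ᵥ ((Omat W lam2 ρ σ02)⁻¹ *ᵥ u))
      (∑ i, (rd i * (∑ k, M0 i k * u k) + r0 i * (∑ k, Md i k * u k))) ρ0 := by
    have hfun : (fun ρ => (Smat W ρ *ᵥ Ys - X' *ᵥ b) ⬝ᵥ ((Omat W lam2 ρ σ02)⁻¹ *ᵥ u))
        = fun ρ => ∑ i, (Smat W ρ *ᵥ Ys - X' *ᵥ b) i * (∑ k, (Omat W lam2 ρ σ02)⁻¹ i k * u k) := by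
      funext ρ; simp [dotProduct, Matrix.mulVec]
    rw [hfun]
    exact HasDerivAt.fun_sum fun i _ => (hasDerivAt_resid W X' Ys b ρ0 i).fun_mul
      (HasDerivAt.fun_sum fun k _ =>
        (hasDerivAt_Omat_inv_entry W lam2 σ02 hσ hlam ρ0 i k).mul_const (u k))
  have h := (hT1.add hT2).const_mul (-(1/2) : ℝ)
  have e1 : (u ⬝ᵥ (Md *ᵥ r0)) + u ⬝ᵥ (M0 *ᵥ rd)
      = ∑ i, u i * (∑ k, (Md i k * r0 k + M0 i k * rd k)) := by
    simp only [dotProduct, Matrix.mulVec]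
    rw [← Finset.sum_add_distrib]
    exact Finset.sum_congr rfl fun i _ => by rw [Finset.sum_add_distrib]; ring
  have e2 : (rd ⬝ᵥ (M0 *ᵥ u)) + r0 ⬝ᵥ (Md *ᵥ u)
      = ∑ i, (rd i * (∑ k, M0 i k * u k) + r0 i * (∑ k, Md i k * u k)) := by
    simp only [dotProduct, Matrix.mulVec]
    rw [← Finset.sum_add_distrib]
  have key : Vform W lam2 σ02 X' Ys ρ0 b j
      = -(1/2) * ((∑ i, u i * (∑ k, (Md i k * r0 k + M0 i k * rd k)))
        + ∑ i, (rd i * (∑ k, M0 i k * u k) + r0 i * (∑ k, Md i k * u k))) := by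
    rw [← e1, ← e2, Vform]
    ring
  rw [key]
  exact h

lemma mixedDeriv (hσ : 0 < σ02) (hlam : 0 < lam2)
    (X' : Matrix (Fin N) (Fin p1 ⊕ Fin p2) ℝ) (Ys : Fin N → ℝ)
    (b : Fin p1 ⊕ Fin p2 → ℝ) (j : Fin p1 ⊕ Fin p2) (ρ0 : ℝ) :
    deriv (fun ρ => deriv (fun t : ℝ =>
        nll W lam2 X' Ys ρ (b + t • (Pi.single j 1 : (Fin p1 ⊕ Fin p2) → ℝ)) σ02) 0) ρ0
      = Vform W lam2 σ02 X' Ys ρ0 b j := by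
  have h1 : (fun ρ => deriv (fun t : ℝ =>
        nll W lam2 X' Ys ρ (b + t • (Pi.single j 1 : (Fin p1 ⊕ Fin p2) → ℝ)) σ02) 0)
      = fun ρ => -(1/2) * ((X' *ᵥ Pi.single j 1) ⬝ᵥ
          ((Omat W lam2 ρ σ02)⁻¹ *ᵥ (Smat W ρ *ᵥ Ys - X' *ᵥ b))
        + (Smat W ρ *ᵥ Ys - X' *ᵥ b) ⬝ᵥ ((Omat W lam2 ρ σ02)⁻¹ *ᵥ (X' *ᵥ Pi.single j 1))) :=
    funext fun ρ => innerDeriv W lam2 σ02 X' Ys ρ b j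
  rw [h1]
  exact (outerDerivHasDerivAt W lam2 σ02 hσ hlam X' Ys b j ρ0).deriv

lemma dot_flip (v a : Fin N → ℝ) (C : Matrix (Fin N) (Fin N) ℝ) :
    v ⬝ᵥ (C *ᵥ a) = a ⬝ᵥ (Cᵀ *ᵥ v) := by
  calc v ⬝ᵥ (C *ᵥ a) = (v ᵥ* C) ⬝ᵥ a := Matrix.dotProduct_mulVec v C a
    _ = (Cᵀ *ᵥ v) ⬝ᵥ a := by rw [← Matrix.vecMul_transpose, Matrix.transpose_transpose]
    _ = a ⬝ᵥ (Cᵀ *ᵥ v) := dotProduct_comm _ _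

end DerivAux

/-- Integrability together with a value for the integral. -/
def HasInt {Ωs : Type*} [MeasurableSpace Ωs] (μ : Measure Ωs) (f : Ωs → ℝ) (v : ℝ) : Prop :=
  Integrable f μ ∧ ∫ ω, f ω ∂μ = v

namespace HasInt

variable {Ωs : Type*} [MeasurableSpace Ωs] {μ : Measure Ωs} {f g : Ωs → ℝ} {v w : ℝ}

lemma add (hf : HasInt μ f v) (hg : HasInt μ g w) :
    HasInt μ (fun ω => f ω + g ω) (v + w) :=
  ⟨hf.1.add hg.1, by rw [integral_add hf.1 hg.1, hf.2, hg.2]⟩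

lemma sub (hf : HasInt μ f v) (hg : HasInt μ g w) :
    HasInt μ (fun ω => f ω - g ω) (v - w) :=
  ⟨hf.1.sub hg.1, by rw [integral_sub hf.1 hg.1, hf.2, hg.2]⟩

lemma neg (hf : HasInt μ f v) : HasInt μ (fun ω => -f ω) (-v) :=
  ⟨hf.1.neg, by rw [integral_neg, hf.2]⟩

lemma const_mul (hf : HasInt μ f v) (c : ℝ) : HasInt μ (fun ω => c * f ω) (c * v) :=
  ⟨hf.1.const_mul c, by rw [integral_const_mul, hf.2]⟩

lemma congr_fun (hf : HasInt μ f v) (h : ∀ ω, f ω = g ω) : HasInt μ g v := by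
  have : f = g := funext h
  rwa [← this]

lemma of_val (hf : HasInt μ f v) (h : v = w) : HasInt μ f w := h ▸ hf

lemma finsum {γ : Type*} (s : Finset γ) {F : γ → Ωs → ℝ} {V : γ → ℝ}
    (h : ∀ t ∈ s, HasInt μ (F t) (V t)) :
    HasInt μ (fun ω => ∑ t ∈ s, F t ω) (∑ t ∈ s, V t) :=
  ⟨integrable_finset_sum s fun t ht => (h t ht).1, by
    rw [integral_finset_sum s fun t ht => (h t ht).1]
    exact Finset.sum_congr rfl fun t ht => (h t ht).2⟩

lemma const (μ : Measure Ωs) [IsProbabilityMeasure μ] (c : ℝ) :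
    HasInt μ (fun _ => c) c := ⟨integrable_const c, by simp⟩

end HasInt

section Noise
variable {Ωs : Type*} [MeasurableSpace Ωs] {μ : Measure Ωs} [IsProbabilityMeasure μ]
  {N p2 : ℕ} {E ε : Ωs → Fin N → ℝ} {Ex : Ωs → Fin N → Fin p2 → ℝ}

variable (hindep : iIndepFun (noiseFam E ε Ex) μ)
  (hmom : ∀ z, MemLp (noiseFam E ε Ex z) 4 μ)
  (hmean : ∀ z, ∫ ω, noiseFam E ε Ex z ω ∂μ = 0)

include hmom in
lemma noise_L2 (z : Fin N ⊕ Fin N ⊕ Fin N × Fin p2) : MemLp (noiseFam E ε Ex z) 2 μ :=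
  (hmom z).mono_exponent (by norm_num)

include hmom hmean in
lemma noise_hasInt (z : Fin N ⊕ Fin N ⊕ Fin N × Fin p2) : HasInt μ (noiseFam E ε Ex z) 0 :=
  ⟨(hmom z).integrable (by norm_num), hmean z⟩

include hmom in
lemma noise_mul_integrable (z z' : Fin N ⊕ Fin N ⊕ Fin N × Fin p2) :
    Integrable (fun ω => noiseFam E ε Ex z ω * noiseFam E ε Ex z' ω) μ := by
  have h2 : (1 : ENNReal) / 1 = 1 / 2 + 1 / 2 := by
    rw [ENNReal.add_halves]; norm_num
  have := (noise_L2 hmom z).integrable_mul (noise_L2 hmom z')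
  exact this

include hindep hmom hmean in
lemma noise_mul_hasInt_zero {z z'} (h : z ≠ z') :
    HasInt μ (fun ω => noiseFam E ε Ex z ω * noiseFam E ε Ex z' ω) 0 := by
  refine ⟨noise_mul_integrable hmom z z', ?_⟩
  have hi := (hindep.indepFun h).integral_fun_mul_eq_mul_integral ((hmom z).aestronglyMeasurable)
    ((hmom z').aestronglyMeasurable)
  rw [hi, hmean z, zero_mul]

variable (hExvar : ∀ i j, ∫ ω, (Ex ω i j) ^ 2 ∂μ = lamx2)

include hindep hmom hmean in
lemma hasInt_Ex_E (i : Fin N) (k : Fin p2) (l : Fin N) :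
    HasInt μ (fun ω => Ex ω i k * E ω l) 0 :=
  noise_mul_hasInt_zero hindep hmom hmean
    (show (Sum.inr (Sum.inr (i, k)) : Fin N ⊕ Fin N ⊕ Fin N × Fin p2) ≠ Sum.inl l by simp)

include hindep hmom hmean in
lemma hasInt_Ex_eps (i : Fin N) (k : Fin p2) (l : Fin N) :
    HasInt μ (fun ω => Ex ω i k * ε ω l) 0 :=
  noise_mul_hasInt_zero hindep hmom hmean
    (show (Sum.inr (Sum.inr (i, k)) : Fin N ⊕ Fin N ⊕ Fin N × Fin p2)
      ≠ Sum.inr (Sum.inl l) by simp)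

include hindep hmom hmean hExvar in
lemma hasInt_Ex_Ex (i m : Fin N) (k l : Fin p2) :
    HasInt μ (fun ω => Ex ω i k * Ex ω m l) (if i = m ∧ k = l then lamx2 else 0) := by
  by_cases h : i = m ∧ k = l
  · obtain ⟨rfl, rfl⟩ := h
    rw [if_pos ⟨rfl, rfl⟩]
    refine ⟨noise_mul_integrable hmom (Sum.inr (Sum.inr (i, k))) (Sum.inr (Sum.inr (i, k))), ?_⟩
    have : (fun ω => Ex ω i k * Ex ω i k) = fun ω => (Ex ω i k) ^ 2 :=
      funext fun ω => (sq (Ex ω i k)).symm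
    rw [this, hExvar i k]
  · rw [if_neg h]
    refine noise_mul_hasInt_zero (z := Sum.inr (Sum.inr (i, k)))
      (z' := Sum.inr (Sum.inr (m, l))) hindep hmom hmean ?_
    simp only [ne_eq, Sum.inr.injEq, Prod.mk.injEq]
    exact fun hc => h hc

include hindep hmom hmean in
lemma shapeD (C A B : Matrix (Fin N) (Fin N) ℝ) (d : Fin N → ℝ) (P : Fin p2 → ℝ) :
    HasInt μ (fun ω => (fun i => ∑ k, Ex ω i k * P k) ⬝ᵥ
      (C *ᵥ (d + A *ᵥ E ω + B *ᵥ ε ω))) 0 := by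
  have atom : ∀ (i : Fin N) (k : Fin p2) (m : Fin N),
      HasInt μ (fun ω => Ex ω i k * (d + A *ᵥ E ω + B *ᵥ ε ω) m) 0 := by
    intro i k m
    have h1 : HasInt μ (fun ω => d m * Ex ω i k) (d m * 0) :=
      (noise_hasInt hmom hmean (Sum.inr (Sum.inr (i, k)))).const_mul (d m)
    have h2 : HasInt μ (fun ω => ∑ l, A m l * (Ex ω i k * E ω l)) (∑ _l : Fin N, (0:ℝ)) := by
      refine HasInt.finsum Finset.univ fun l _ => ?_
      exact ((hasInt_Ex_E hindep hmom hmean i k l).const_mul (A m l)).of_val (by ring)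
    have h3 : HasInt μ (fun ω => ∑ l, B m l * (Ex ω i k * ε ω l)) (∑ _l : Fin N, (0:ℝ)) := by
      refine HasInt.finsum Finset.univ fun l _ => ?_
      exact ((hasInt_Ex_eps hindep hmom hmean i k l).const_mul (B m l)).of_val (by ring)
    refine (((h1.add h2).add h3).of_val (by simp)).congr_fun fun ω => ?_
    have e1 : ∑ l, A m l * (Ex ω i k * E ω l) = Ex ω i k * ∑ l, A m l * E ω l := by
      rw [Finset.mul_sum]; exact Finset.sum_congr rfl fun l _ => by ring
    have e2 : ∑ l, B m l * (Ex ω i k * ε ω l) = Ex ω i k * ∑ l, B m l * ε ω l := by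
      rw [Finset.mul_sum]; exact Finset.sum_congr rfl fun l _ => by ring
    rw [e1, e2]
    simp only [Pi.add_apply, Matrix.mulVec, dotProduct]
    ring
  have main : HasInt μ (fun ω => ∑ i, ∑ k, ∑ m,
      (P k * C i m) * (Ex ω i k * (d + A *ᵥ E ω + B *ᵥ ε ω) m))
      (∑ _i : Fin N, ∑ _k : Fin p2, ∑ _m : Fin N, (0:ℝ)) := by
    refine HasInt.finsum Finset.univ fun i _ => HasInt.finsum Finset.univ fun k _ =>
      HasInt.finsum Finset.univ fun m _ => ?_
    exact ((atom i k m).const_mul _).of_val (by ring)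
  refine (main.of_val (by simp)).congr_fun fun ω => ?_
  simp only [dotProduct, Matrix.mulVec]
  refine Finset.sum_congr rfl fun i _ => ?_
  rw [Finset.sum_mul_sum]
  refine Finset.sum_congr rfl fun k _ => Finset.sum_congr rfl fun m _ => ?_
  ring

include hindep hmom hmean in
lemma shapeB (a : Fin N → ℝ) (C : Matrix (Fin N) (Fin N) ℝ) (Q : Fin p2 → ℝ) :
    HasInt μ (fun ω => a ⬝ᵥ (C *ᵥ (fun m => ∑ l, Ex ω m l * Q l))) 0 := by
  have main : HasInt μ (fun ω => ∑ i, ∑ m, ∑ l, (a i * C i m * Q l) * Ex ω m l)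
      (∑ _i : Fin N, ∑ _m : Fin N, ∑ _l : Fin p2, (0:ℝ)) := by
    refine HasInt.finsum Finset.univ fun i _ => HasInt.finsum Finset.univ fun m _ =>
      HasInt.finsum Finset.univ fun l _ => ?_
    exact ((noise_hasInt hmom hmean (Sum.inr (Sum.inr (m, l)))).const_mul _).of_val (by ring)
  refine (main.of_val (by simp)).congr_fun fun ω => ?_
  simp only [dotProduct, Matrix.mulVec]
  refine Finset.sum_congr rfl fun i _ => ?_
  rw [Finset.mul_sum]
  refine Finset.sum_congr rfl fun m _ => ?_
  rw [Finset.mul_sum, Finset.mul_sum]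
  refine Finset.sum_congr rfl fun l _ => ?_
  ring

include hindep hmom hmean hExvar in
lemma shapeC (C : Matrix (Fin N) (Fin N) ℝ) (P Q : Fin p2 → ℝ) :
    HasInt μ (fun ω => (fun i => ∑ k, Ex ω i k * P k) ⬝ᵥ
        (C *ᵥ (fun m => ∑ l, Ex ω m l * Q l)))
      (lamx2 * Matrix.trace C * ∑ k, P k * Q k) := by
  have main : HasInt μ
      (fun ω => ∑ i, ∑ k, ∑ m, ∑ l, (P k * (C i m * Q l)) * (Ex ω i k * Ex ω m l))
      (∑ i : Fin N, ∑ k : Fin p2, ∑ m : Fin N, ∑ l : Fin p2,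
        (P k * (C i m * Q l)) * (if i = m ∧ k = l then lamx2 else 0)) := by
    refine HasInt.finsum Finset.univ fun i _ => HasInt.finsum Finset.univ fun k _ =>
      HasInt.finsum Finset.univ fun m _ => HasInt.finsum Finset.univ fun l _ => ?_
    exact (hasInt_Ex_Ex hindep hmom hmean hExvar i m k l).const_mul _
  have hval : (∑ i : Fin N, ∑ k : Fin p2, ∑ m : Fin N, ∑ l : Fin p2,
        (P k * (C i m * Q l)) * (if i = m ∧ k = l then lamx2 else 0))
      = lamx2 * Matrix.trace C * ∑ k, P k * Q k := by
    simp only [mul_ite, mul_zero]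
    have e0 : ∀ (i : Fin N) (k : Fin p2),
        (∑ m : Fin N, ∑ l : Fin p2,
          (if i = m ∧ k = l then P k * (C i m * Q l) * lamx2 else 0))
        = P k * (C i i * Q k) * lamx2 := by
      intro i k
      have e1 : ∀ m : Fin N, (∑ l : Fin p2,
          (if i = m ∧ k = l then P k * (C i m * Q l) * lamx2 else 0))
          = (if i = m then P k * (C i m * Q k) * lamx2 else 0) := by
        intro m
        have e2 : ∀ l : Fin p2, (if i = m ∧ k = l then P k * (C i m * Q l) * lamx2 else 0)
            = (if k = l then (if i = m then P k * (C i m * Q l) * lamx2 else 0) else 0) := by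
          intro l; by_cases h1 : i = m <;> by_cases h2 : k = l <;> simp [h1, h2]
        rw [Finset.sum_congr rfl fun l _ => e2 l]
        rw [Finset.sum_ite_eq Finset.univ k
          (fun l => if i = m then P k * (C i m * Q l) * lamx2 else 0)]
        simp
      rw [Finset.sum_congr rfl fun m _ => e1 m]
      rw [Finset.sum_ite_eq Finset.univ i (fun m => P k * (C i m * Q k) * lamx2)]
      simp
    rw [Finset.sum_congr rfl fun i (_ : i ∈ Finset.univ) =>
      Finset.sum_congr rfl fun k (_ : k ∈ Finset.univ) => e0 i k]
    rw [Matrix.trace, Finset.mul_sum, Finset.sum_comm]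
    refine Finset.sum_congr rfl fun k _ => ?_
    rw [Finset.mul_sum, Finset.sum_mul]
    refine Finset.sum_congr rfl fun i _ => ?_
    simp only [Matrix.diag_apply]
    ring
  refine (main.of_val hval).congr_fun fun ω => ?_
  simp only [dotProduct, Matrix.mulVec]
  refine Finset.sum_congr rfl fun i _ => ?_
  rw [Finset.sum_mul_sum]
  refine Finset.sum_congr rfl fun k _ => ?_
  refine Finset.sum_congr rfl fun m _ => ?_
  rw [Finset.mul_sum, Finset.mul_sum]
  refine Finset.sum_congr rfl fun l _ => ?_
  ring

include hmom hmean in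
lemma shapeE (a : Fin N → ℝ) (C A B : Matrix (Fin N) (Fin N) ℝ) (d : Fin N → ℝ) :
    HasInt μ (fun ω => a ⬝ᵥ (C *ᵥ (d + A *ᵥ E ω + B *ᵥ ε ω))) (a ⬝ᵥ (C *ᵥ d)) := by
  have atom : ∀ m : Fin N, HasInt μ (fun ω => (d + A *ᵥ E ω + B *ᵥ ε ω) m) (d m) := by
    intro m
    have h1 : HasInt μ (fun _ : Ωs => d m) (d m) := HasInt.const μ (d m)
    have h2 : HasInt μ (fun ω => ∑ l, A m l * E ω l) (∑ _l : Fin N, (0:ℝ)) :=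
      HasInt.finsum Finset.univ fun l _ =>
        ((noise_hasInt hmom hmean (Sum.inl l)).const_mul (A m l)).of_val (by ring)
    have h3 : HasInt μ (fun ω => ∑ l, B m l * ε ω l) (∑ _l : Fin N, (0:ℝ)) :=
      HasInt.finsum Finset.univ fun l _ =>
        ((noise_hasInt hmom hmean (Sum.inr (Sum.inl l))).const_mul (B m l)).of_val (by ring)
    refine (((h1.add h2).add h3).of_val (by simp)).congr_fun fun ω => ?_
    simp only [Pi.add_apply, Matrix.mulVec, dotProduct]
  have main : HasInt μ (fun ω => ∑ i, ∑ m, (a i * C i m) * (d + A *ᵥ E ω + B *ᵥ ε ω) m)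
      (∑ i : Fin N, ∑ m : Fin N, (a i * C i m) * d m) :=
    HasInt.finsum Finset.univ fun i _ => HasInt.finsum Finset.univ fun m _ =>
      (atom m).const_mul _
  have hval : (∑ i : Fin N, ∑ m : Fin N, (a i * C i m) * d m) = a ⬝ᵥ (C *ᵥ d) := by
    simp only [dotProduct, Matrix.mulVec]
    refine Finset.sum_congr rfl fun i _ => ?_
    rw [Finset.mul_sum]
    exact Finset.sum_congr rfl fun m _ => by ring
  refine (main.of_val hval).congr_fun fun ω => ?_
  simp only [dotProduct, Matrix.mulVec]
  refine Finset.sum_congr rfl fun i _ => ?_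
  rw [Finset.mul_sum]
  exact Finset.sum_congr rfl fun m _ => by ring

end Noise

lemma Xobs_mulVec {N p1 p2 : ℕ} (X : Matrix (Fin N) (Fin p1 ⊕ Fin p2) ℝ)
    (Exm : Fin N → Fin p2 → ℝ) (v : Fin p1 ⊕ Fin p2 → ℝ) :
    Xobs X Exm *ᵥ v = X *ᵥ v + fun i => ∑ k, Exm i k * v (Sum.inr k) := by
  funext i
  rw [Xobs, Matrix.add_mulVec, Pi.add_apply, Pi.add_apply]
  congr 1
  simp [Matrix.mulVec, dotProduct, Fintype.sum_sum_type]

lemma Vform_def {N p1 p2 : ℕ} (W : Matrix (Fin N) (Fin N) ℝ) (lam2 σ02 : ℝ)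
    (X' : Matrix (Fin N) (Fin p1 ⊕ Fin p2) ℝ) (Ys : Fin N → ℝ)
    (ρ0 : ℝ) (b : Fin p1 ⊕ Fin p2 → ℝ) (j : Fin p1 ⊕ Fin p2) :
    Vform W lam2 σ02 X' Ys ρ0 b j =
  -(1/2) * ((X' *ᵥ Pi.single j 1) ⬝ᵥ
      ((lam2 • ((Omat W lam2 ρ0 σ02)⁻¹ * WSmat W ρ0 * (Omat W lam2 ρ0 σ02)⁻¹)) *ᵥ
        (Smat W ρ0 *ᵥ Ys - X' *ᵥ b))
    + (X' *ᵥ Pi.single j 1) ⬝ᵥ ((Omat W lam2 ρ0 σ02)⁻¹ *ᵥ (-(W *ᵥ Ys)))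
    + (-(W *ᵥ Ys)) ⬝ᵥ ((Omat W lam2 ρ0 σ02)⁻¹ *ᵥ (X' *ᵥ Pi.single j 1))
    + (Smat W ρ0 *ᵥ Ys - X' *ᵥ b) ⬝ᵥ
        ((lam2 • ((Omat W lam2 ρ0 σ02)⁻¹ * WSmat W ρ0 * (Omat W lam2 ρ0 σ02)⁻¹)) *ᵥ
          (X' *ᵥ Pi.single j 1))) := rfl

theorem statement_7
    {Ωs : Type*} [MeasurableSpace Ωs] (μ : Measure Ωs) [IsProbabilityMeasure μ]
    (N p1 p2 : ℕ) (hN : 0 < N) (hp1 : 0 < p1) (hp2 : 0 < p2)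
    (W : Matrix (Fin N) (Fin N) ℝ) (hW : ∀ i, W i i = 0)
    (X : Matrix (Fin N) (Fin p1 ⊕ Fin p2) ℝ)
    (ρ0 : ℝ) (β0 : Fin p1 ⊕ Fin p2 → ℝ) (σ02 lam2 lamx2 : ℝ)
    (hσ : 0 < σ02) (hlam : 0 < lam2) (hlamx : 0 < lamx2)
    (hS0 : 0 < (Smat W ρ0).det)
    (E ε : Ωs → Fin N → ℝ) (Ex : Ωs → Fin N → Fin p2 → ℝ)
    (hindep : iIndepFun (noiseFam E ε Ex) μ)
    (hmom : ∀ z, MemLp (noiseFam E ε Ex z) 4 μ)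
    (hmean : ∀ z, ∫ ω, noiseFam E ε Ex z ω ∂μ = 0)
    (hEvar : ∀ i, ∫ ω, (E ω i) ^ 2 ∂μ = σ02)
    (hepsvar : ∀ i, ∫ ω, (ε ω i) ^ 2 ∂μ = lam2)
    (hExvar : ∀ i j, ∫ ω, (Ex ω i j) ^ 2 ∂μ = lamx2) :
    ∀ j : Fin p1 ⊕ Fin p2,
      (∫ ω, deriv (fun ρ => deriv (fun t : ℝ =>
            nll W lam2 (Xobs X (Ex ω)) (Yobs W ρ0 X β0 (E ω) (ε ω)) ρ
              (β0 + t • (Pi.single j 1 : (Fin p1 ⊕ Fin p2) → ℝ)) σ02) 0) ρ0 ∂μ)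
        - (∫ ω, deriv (fun ρ => deriv (fun t : ℝ =>
            nll W lam2 X (Yobs W ρ0 X β0 (E ω) (ε ω)) ρ
              (β0 + t • (Pi.single j 1 : (Fin p1 ⊕ Fin p2) → ℝ)) σ02) 0) ρ0 ∂μ)
        = Sum.elim (fun _ => (0 : ℝ))
            (fun k => lam2 * lamx2 *
              Matrix.trace ((Omat W lam2 ρ0 σ02)⁻¹ * (Omat W lam2 ρ0 σ02)⁻¹ * WSmat W ρ0) *
              β0 (Sum.inr k)) j
  := by
  classical
  intro j
  have hdet0 : IsUnit (Smat W ρ0).det := isUnit_iff_ne_zero.2 hS0.ne'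
  have hrw1 : (∫ ω, deriv (fun ρ => deriv (fun t : ℝ =>
        nll W lam2 (Xobs X (Ex ω)) (Yobs W ρ0 X β0 (E ω) (ε ω)) ρ
          (β0 + t • (Pi.single j 1 : (Fin p1 ⊕ Fin p2) → ℝ)) σ02) 0) ρ0 ∂μ)
      = ∫ ω, Vform W lam2 σ02 (Xobs X (Ex ω)) (Yobs W ρ0 X β0 (E ω) (ε ω)) ρ0 β0 j ∂μ :=
    integral_congr_ae (Filter.Eventually.of_forall fun ω =>
      mixedDeriv W lam2 σ02 hσ hlam _ _ β0 j ρ0)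
  have hrw2 : (∫ ω, deriv (fun ρ => deriv (fun t : ℝ =>
        nll W lam2 X (Yobs W ρ0 X β0 (E ω) (ε ω)) ρ
          (β0 + t • (Pi.single j 1 : (Fin p1 ⊕ Fin p2) → ℝ)) σ02) 0) ρ0 ∂μ)
      = ∫ ω, Vform W lam2 σ02 X (Yobs W ρ0 X β0 (E ω) (ε ω)) ρ0 β0 j ∂μ :=
    integral_congr_ae (Filter.Eventually.of_forall fun ω =>
      mixedDeriv W lam2 σ02 hσ hlam _ _ β0 j ρ0)
  rw [hrw1, hrw2]
  -- facts about the random quantities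
  have fact1 : ∀ ω : Ωs, Smat W ρ0 *ᵥ Yobs W ρ0 X β0 (E ω) (ε ω) - X *ᵥ β0
      = (0 : Fin N → ℝ) + (1 : Matrix (Fin N) (Fin N) ℝ) *ᵥ E ω + Smat W ρ0 *ᵥ ε ω := by
    intro ω
    rw [Yobs, Matrix.mulVec_add, Matrix.mulVec_mulVec, Matrix.mul_nonsing_inv _ hdet0,
      Matrix.one_mulVec, Matrix.one_mulVec]
    abel
  have fact2 : ∀ ω : Ωs, -(W *ᵥ Yobs W ρ0 X β0 (E ω) (ε ω))
      = -(W *ᵥ ((Smat W ρ0)⁻¹ *ᵥ (X *ᵥ β0))) + (-(W * (Smat W ρ0)⁻¹)) *ᵥ E ω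
        + (-W) *ᵥ ε ω := by
    intro ω
    rw [Yobs]
    simp only [Matrix.mulVec_add, Matrix.mulVec_mulVec, Matrix.neg_mulVec, neg_add]
  have fact3 : ∀ ω : Ωs, Xobs X (Ex ω) *ᵥ (Pi.single j 1 : (Fin p1 ⊕ Fin p2) → ℝ)
      = X *ᵥ (Pi.single j 1 : (Fin p1 ⊕ Fin p2) → ℝ)
        + fun i => ∑ k, Ex ω i k * (Pi.single j 1 : (Fin p1 ⊕ Fin p2) → ℝ) (Sum.inr k) :=
    fun ω => Xobs_mulVec X (Ex ω) _
  have fact4 : ∀ ω : Ωs, Smat W ρ0 *ᵥ Yobs W ρ0 X β0 (E ω) (ε ω) - Xobs X (Ex ω) *ᵥ β0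
      = ((0 : Fin N → ℝ) + (1 : Matrix (Fin N) (Fin N) ℝ) *ᵥ E ω + Smat W ρ0 *ᵥ ε ω)
        - fun m => ∑ l, Ex ω m l * β0 (Sum.inr l) := by
    intro ω
    rw [Xobs_mulVec, ← fact1 ω]
    abel
  -- the twelve / four constituent integrals
  have hse1 := shapeE hmom hmean (X *ᵥ (Pi.single j 1 : (Fin p1 ⊕ Fin p2) → ℝ))
    (lam2 • ((Omat W lam2 ρ0 σ02)⁻¹ * WSmat W ρ0 * (Omat W lam2 ρ0 σ02)⁻¹))
    (1 : Matrix (Fin N) (Fin N) ℝ) (Smat W ρ0) (0 : Fin N → ℝ)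
  have hse2 := shapeE hmom hmean (X *ᵥ (Pi.single j 1 : (Fin p1 ⊕ Fin p2) → ℝ))
    ((Omat W lam2 ρ0 σ02)⁻¹) (-(W * (Smat W ρ0)⁻¹)) (-W)
    (-(W *ᵥ ((Smat W ρ0)⁻¹ *ᵥ (X *ᵥ β0))))
  have hse3 := shapeE hmom hmean (X *ᵥ (Pi.single j 1 : (Fin p1 ⊕ Fin p2) → ℝ))
    ((Omat W lam2 ρ0 σ02)⁻¹)ᵀ (-(W * (Smat W ρ0)⁻¹)) (-W)
    (-(W *ᵥ ((Smat W ρ0)⁻¹ *ᵥ (X *ᵥ β0))))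
  have hse4 := shapeE hmom hmean (X *ᵥ (Pi.single j 1 : (Fin p1 ⊕ Fin p2) → ℝ))
    (lam2 • ((Omat W lam2 ρ0 σ02)⁻¹ * WSmat W ρ0 * (Omat W lam2 ρ0 σ02)⁻¹))ᵀ
    (1 : Matrix (Fin N) (Fin N) ℝ) (Smat W ρ0) (0 : Fin N → ℝ)
  have hsd1 := shapeD hindep hmom hmean
    (lam2 • ((Omat W lam2 ρ0 σ02)⁻¹ * WSmat W ρ0 * (Omat W lam2 ρ0 σ02)⁻¹))
    (1 : Matrix (Fin N) (Fin N) ℝ) (Smat W ρ0) (0 : Fin N → ℝ)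
    (fun k => (Pi.single j 1 : (Fin p1 ⊕ Fin p2) → ℝ) (Sum.inr k))
  have hsd2 := shapeD hindep hmom hmean
    ((Omat W lam2 ρ0 σ02)⁻¹) (-(W * (Smat W ρ0)⁻¹)) (-W)
    (-(W *ᵥ ((Smat W ρ0)⁻¹ *ᵥ (X *ᵥ β0))))
    (fun k => (Pi.single j 1 : (Fin p1 ⊕ Fin p2) → ℝ) (Sum.inr k))
  have hsd3 := shapeD hindep hmom hmean
    ((Omat W lam2 ρ0 σ02)⁻¹)ᵀ (-(W * (Smat W ρ0)⁻¹)) (-W)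
    (-(W *ᵥ ((Smat W ρ0)⁻¹ *ᵥ (X *ᵥ β0))))
    (fun k => (Pi.single j 1 : (Fin p1 ⊕ Fin p2) → ℝ) (Sum.inr k))
  have hsd4 := shapeD hindep hmom hmean
    (lam2 • ((Omat W lam2 ρ0 σ02)⁻¹ * WSmat W ρ0 * (Omat W lam2 ρ0 σ02)⁻¹))ᵀ
    (1 : Matrix (Fin N) (Fin N) ℝ) (Smat W ρ0) (0 : Fin N → ℝ)
    (fun k => (Pi.single j 1 : (Fin p1 ⊕ Fin p2) → ℝ) (Sum.inr k))
  have hsb1 := shapeB hindep hmom hmean (X *ᵥ (Pi.single j 1 : (Fin p1 ⊕ Fin p2) → ℝ))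
    (lam2 • ((Omat W lam2 ρ0 σ02)⁻¹ * WSmat W ρ0 * (Omat W lam2 ρ0 σ02)⁻¹))
    (fun l => β0 (Sum.inr l))
  have hsb4 := shapeB hindep hmom hmean (X *ᵥ (Pi.single j 1 : (Fin p1 ⊕ Fin p2) → ℝ))
    (lam2 • ((Omat W lam2 ρ0 σ02)⁻¹ * WSmat W ρ0 * (Omat W lam2 ρ0 σ02)⁻¹))ᵀ
    (fun l => β0 (Sum.inr l))
  have hsc1 := shapeC hindep hmom hmean hExvar
    (lam2 • ((Omat W lam2 ρ0 σ02)⁻¹ * WSmat W ρ0 * (Omat W lam2 ρ0 σ02)⁻¹))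
    (fun k => (Pi.single j 1 : (Fin p1 ⊕ Fin p2) → ℝ) (Sum.inr k))
    (fun l => β0 (Sum.inr l))
  have hsc4 := shapeC hindep hmom hmean hExvar
    (lam2 • ((Omat W lam2 ρ0 σ02)⁻¹ * WSmat W ρ0 * (Omat W lam2 ρ0 σ02)⁻¹))ᵀ
    (fun k => (Pi.single j 1 : (Fin p1 ⊕ Fin p2) → ℝ) (Sum.inr k))
    (fun l => β0 (Sum.inr l))
  -- the two integrands
  have huA := ((((((hse1.add hsd1).sub (hsb1.add hsc1)).add (hse2.add hsd2)).add
      (hse3.add hsd3)).add ((hse4.add hsd4).sub (hsb4.add hsc4))).const_mul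
      (-(1/2) : ℝ)).congr_fun
    (g := fun ω => Vform W lam2 σ02 (Xobs X (Ex ω)) (Yobs W ρ0 X β0 (E ω) (ε ω)) ρ0 β0 j)
    (fun ω => by
      simp only [Vform_def]
      rw [fact4 ω, fact3 ω, fact2 ω,
        dot_flip (-(W *ᵥ ((Smat W ρ0)⁻¹ *ᵥ (X *ᵥ β0))) + (-(W * (Smat W ρ0)⁻¹)) *ᵥ E ω
            + (-W) *ᵥ ε ω),
        dot_flip (((0 : Fin N → ℝ) + (1 : Matrix (Fin N) (Fin N) ℝ) *ᵥ E ω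
            + Smat W ρ0 *ᵥ ε ω) - fun m => ∑ l, Ex ω m l * β0 (Sum.inr l))]
      simp only [Matrix.mulVec_sub, dotProduct_sub, add_dotProduct]
      )
  have huB := ((((hse1.add hse2).add hse3).add hse4).const_mul (-(1/2) : ℝ)).congr_fun
    (g := fun ω => Vform W lam2 σ02 X (Yobs W ρ0 X β0 (E ω) (ε ω)) ρ0 β0 j)
    (fun ω => by
      simp only [Vform_def]
      rw [fact1 ω, fact2 ω,
        dot_flip (-(W *ᵥ ((Smat W ρ0)⁻¹ *ᵥ (X *ᵥ β0))) + (-(W * (Smat W ρ0)⁻¹)) *ᵥ E ω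
            + (-W) *ᵥ ε ω),
        dot_flip ((0 : Fin N → ℝ) + (1 : Matrix (Fin N) (Fin N) ℝ) *ᵥ E ω
            + Smat W ρ0 *ᵥ ε ω)])
  rw [huA.2, huB.2]
  -- final algebra
  have htr : Matrix.trace ((Omat W lam2 ρ0 σ02)⁻¹ * WSmat W ρ0 * (Omat W lam2 ρ0 σ02)⁻¹)
      = Matrix.trace ((Omat W lam2 ρ0 σ02)⁻¹ * (Omat W lam2 ρ0 σ02)⁻¹ * WSmat W ρ0) := by
    rw [Matrix.trace_mul_comm, ← mul_assoc]
  simp only [Matrix.mulVec_zero, dotProduct_zero, Matrix.trace_transpose,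
    Matrix.trace_smul, smul_eq_mul, add_zero, zero_add]
  rw [htr]
  cases j with
  | inl a =>
      simp [Pi.single_apply]
  | inr k0 =>
      have hsum : (∑ k, (Pi.single (Sum.inr k0 : Fin p1 ⊕ Fin p2) 1 :
          (Fin p1 ⊕ Fin p2) → ℝ) (Sum.inr k) * β0 (Sum.inr k)) = β0 (Sum.inr k0) := by
        simp [Pi.single_apply]
      rw [hsum]
      simp only [Sum.elim_inr]
      ring


end PSAR
end

section
/- The bias-corrected variance update of the corrected likelihood algorithm is unbiased at the true parameter: E[‖S0 Y* − X* β0‖²] = N σ0² + λ² tr(S0 S0ᵀ) + N λx² (β02ᵀ β02); equivalently, E[ N⁻¹{‖S0 Y* − X* β0‖² − λ² tr(S0 S0ᵀ)} − λx² β02ᵀ β02 ] = σ0². -/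
open MeasureTheory ProbabilityTheory Matrix
open scoped Matrix

namespace PSAR

section Aux

variable {Ωs : Type*} [MeasurableSpace Ωs] {μ : Measure Ωs} [IsProbabilityMeasure μ]
variable {ι : Type*} [Fintype ι]

lemma aux_integrable_mul (f g : Ωs → ℝ) (hf : MemLp f 2 μ) (hg : MemLp g 2 μ) :
    Integrable (fun ω => f ω * g ω) μ := by
  have h12 : (1 : ENNReal) / 1 = 1 / 2 + 1 / 2 := by
    rw [ENNReal.div_add_div_same, one_add_one_eq_two, ENNReal.div_self two_ne_zero ENNReal.ofNat_ne_top, one_div_one]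
  have h := hg.smul (r := 1) hf
  exact memLp_one_iff_integrable.mp h

lemma aux_sq_sum (f : ι → Ωs → ℝ)
    (hindep : iIndepFun f μ)
    (hmom : ∀ z, MemLp (f z) 2 μ) (hmean : ∀ z, ∫ ω, f z ω ∂μ = 0)
    (c : ι → ℝ) :
    haveI := Classical.decEq ι
    Integrable (fun ω => (∑ z, c z * f z ω) ^ 2) μ ∧
    ∫ ω, (∑ z, c z * f z ω) ^ 2 ∂μ = ∑ z, (c z) ^ 2 * ∫ ω, (f z ω) ^ 2 ∂μ := by
  classical
  have hint1 : ∀ z, Integrable (f z) μ := fun z => (hmom z).integrable (by norm_num)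
  have hintmul : ∀ z z', Integrable (fun ω => (c z * f z ω) * (c z' * f z' ω)) μ := by
    intro z z'
    have h := (aux_integrable_mul (f z) (f z') (hmom z) (hmom z')).const_mul (c z * c z')
    exact h.congr (Filter.Eventually.of_forall fun ω => by ring)
  have hexp : ∀ ω, (∑ z, c z * f z ω) ^ 2
      = ∑ z, ∑ z', (c z * f z ω) * (c z' * f z' ω) := by
    intro ω; rw [sq, Finset.sum_mul_sum]
  constructor
  · have : Integrable (fun ω => ∑ z, ∑ z', (c z * f z ω) * (c z' * f z' ω)) μ :=
      integrable_finset_sum _ fun z _ => integrable_finset_sum _ fun z' _ => hintmul z z'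
    exact this.congr (Filter.Eventually.of_forall fun ω => (hexp ω).symm)
  · have hterm : ∀ z z', ∫ ω, (c z * f z ω) * (c z' * f z' ω) ∂μ
        = if z' = z then (c z) ^ 2 * ∫ ω, (f z ω) ^ 2 ∂μ else 0 := by
      intro z z'
      by_cases h : z' = z
      · subst h
        rw [if_pos rfl]
        have : ∀ ω, (c z' * f z' ω) * (c z' * f z' ω) = (c z') ^ 2 * (f z' ω) ^ 2 := by
          intro ω; ring
        simp_rw [this]
        rw [integral_const_mul]
      · rw [if_neg h]
        have hind : IndepFun (f z) (f z') μ := hindep.indepFun (fun h' => h h'.symm)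
        have hzz : ∫ ω, f z ω * f z' ω ∂μ = 0 := by
          have h := hind.integral_mul_eq_mul_integral (hint1 z).aestronglyMeasurable (hint1 z').aestronglyMeasurable
          have h2 : ∫ ω, f z ω * f z' ω ∂μ = integral μ (f z * f z') := rfl
          rw [h2, h, hmean z, hmean z', mul_zero]
        have : ∀ ω, (c z * f z ω) * (c z' * f z' ω) = (c z * c z') * (f z ω * f z' ω) := by
          intro ω; ring
        simp_rw [this]
        rw [integral_const_mul, hzz, mul_zero]
    calc ∫ ω, (∑ z, c z * f z ω) ^ 2 ∂μ
        = ∫ ω, ∑ z, ∑ z', (c z * f z ω) * (c z' * f z' ω) ∂μ := by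
          congr 1; funext ω; exact hexp ω
      _ = ∑ z, ∑ z', ∫ ω, (c z * f z ω) * (c z' * f z' ω) ∂μ := by
          rw [integral_finset_sum _ fun z _ =>
            integrable_finset_sum _ fun z' _ => hintmul z z']
          exact Finset.sum_congr rfl fun z _ =>
            integral_finset_sum _ fun z' _ => hintmul z z'
      _ = ∑ z, (c z) ^ 2 * ∫ ω, (f z ω) ^ 2 ∂μ := by
          refine Finset.sum_congr rfl fun z _ => ?_
          rw [Finset.sum_congr rfl fun z' _ => hterm z z', Finset.sum_ite_eq']
          simp

end Aux

theorem statement_10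
    {Ωs : Type*} [MeasurableSpace Ωs] (μ : Measure Ωs) [IsProbabilityMeasure μ]
    (N p1 p2 : ℕ) (hN : 0 < N) (hp1 : 0 < p1) (hp2 : 0 < p2)
    (W : Matrix (Fin N) (Fin N) ℝ) (hW : ∀ i, W i i = 0)
    (X : Matrix (Fin N) (Fin p1 ⊕ Fin p2) ℝ)
    (ρ0 : ℝ) (β0 : Fin p1 ⊕ Fin p2 → ℝ) (σ02 lam2 lamx2 : ℝ)
    (hσ : 0 < σ02) (hlam : 0 < lam2) (hlamx : 0 < lamx2)
    (hS0 : 0 < (Smat W ρ0).det)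
    (E ε : Ωs → Fin N → ℝ) (Ex : Ωs → Fin N → Fin p2 → ℝ)
    (hindep : iIndepFun (noiseFam E ε Ex) μ)
    (hmom : ∀ z, MemLp (noiseFam E ε Ex z) 4 μ)
    (hmean : ∀ z, ∫ ω, noiseFam E ε Ex z ω ∂μ = 0)
    (hEvar : ∀ i, ∫ ω, (E ω i) ^ 2 ∂μ = σ02)
    (hepsvar : ∀ i, ∫ ω, (ε ω i) ^ 2 ∂μ = lam2)
    (hExvar : ∀ i j, ∫ ω, (Ex ω i j) ^ 2 ∂μ = lamx2) :
    (∫ ω, (Smat W ρ0 *ᵥ Yobs W ρ0 X β0 (E ω) (ε ω) - Xobs X (Ex ω) *ᵥ β0) ⬝ᵥ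
        (Smat W ρ0 *ᵥ Yobs W ρ0 X β0 (E ω) (ε ω) - Xobs X (Ex ω) *ᵥ β0) ∂μ
      = N * σ02 + lam2 * Matrix.trace (Smat W ρ0 * (Smat W ρ0)ᵀ)
          + N * lamx2 * (∑ k, β0 (Sum.inr k) ^ 2)) ∧
    ∫ ω, ((N : ℝ)⁻¹ *
        ((Smat W ρ0 *ᵥ Yobs W ρ0 X β0 (E ω) (ε ω) - Xobs X (Ex ω) *ᵥ β0) ⬝ᵥ
          (Smat W ρ0 *ᵥ Yobs W ρ0 X β0 (E ω) (ε ω) - Xobs X (Ex ω) *ᵥ β0)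
          - lam2 * Matrix.trace (Smat W ρ0 * (Smat W ρ0)ᵀ))
        - lamx2 * (∑ k, β0 (Sum.inr k) ^ 2)) ∂μ = σ02
  := by
  classical
  set S0 := Smat W ρ0 with hS0def
  have hSinv : S0 * S0⁻¹ = 1 := Matrix.mul_nonsing_inv _ (Ne.isUnit hS0.ne')
  -- coefficient matrix
  set cmat : Fin N → (Fin N ⊕ Fin N ⊕ Fin N × Fin p2) → ℝ := fun i =>
    Sum.elim (fun j => if j = i then 1 else 0)
      (Sum.elim (fun j => S0 i j)
        (fun q => if q.1 = i then -β0 (Sum.inr q.2) else 0)) with hcmat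
  set f := noiseFam E ε Ex with hf
  -- residual representation
  have hres : ∀ ω i,
      (Smat W ρ0 *ᵥ Yobs W ρ0 X β0 (E ω) (ε ω) - Xobs X (Ex ω) *ᵥ β0) i
      = ∑ z, cmat i z * f z ω := by
    intro ω i
    have hlhs : (Smat W ρ0 *ᵥ Yobs W ρ0 X β0 (E ω) (ε ω) - Xobs X (Ex ω) *ᵥ β0) i
        = E ω i + (S0 *ᵥ ε ω) i - ∑ k, Ex ω i k * β0 (Sum.inr k) := by
      simp only [Yobs, Xobs, ← hS0def, Matrix.mulVec_add, Matrix.mulVec_mulVec, ← Matrix.mul_assoc, hSinv, Matrix.one_mul,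
        Matrix.one_mulVec, Matrix.add_mulVec, Pi.sub_apply, Pi.add_apply]
      have h2 : ((Matrix.of fun i j => Sum.elim (fun _ => (0:ℝ)) (fun k => Ex ω i k) j) *ᵥ β0) i
          = ∑ k, Ex ω i k * β0 (Sum.inr k) := by
        simp [Matrix.mulVec, dotProduct, Fintype.sum_sum_type]
      rw [h2]; ring
    rw [hlhs]
    rw [show (∑ z, cmat i z * f z ω)
        = (∑ j, cmat i (Sum.inl j) * f (Sum.inl j) ω)
          + ((∑ j, cmat i (Sum.inr (Sum.inl j)) * f (Sum.inr (Sum.inl j)) ω)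
            + ∑ q : Fin N × Fin p2,
                cmat i (Sum.inr (Sum.inr q)) * f (Sum.inr (Sum.inr q)) ω) from by
      rw [Fintype.sum_sum_type, Fintype.sum_sum_type]]
    have e1 : (∑ j, cmat i (Sum.inl j) * f (Sum.inl j) ω) = E ω i := by
      simp [hcmat, hf, noiseFam, ite_mul]
    have e2 : (∑ j, cmat i (Sum.inr (Sum.inl j)) * f (Sum.inr (Sum.inl j)) ω)
        = (S0 *ᵥ ε ω) i := by
      simp [hcmat, hf, noiseFam, Matrix.mulVec, dotProduct]
    have e3 : (∑ q : Fin N × Fin p2,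
        cmat i (Sum.inr (Sum.inr q)) * f (Sum.inr (Sum.inr q)) ω)
        = -∑ k, Ex ω i k * β0 (Sum.inr k) := by
      rw [Fintype.sum_prod_type]
      rw [Finset.sum_eq_single i]
      · simp [hcmat, hf, noiseFam, Finset.mul_sum]
        exact Finset.sum_congr rfl fun k _ => by ring
      · intro j _ hj
        simp [hcmat, hf, noiseFam, hj]
      · simp
    rw [e1, e2, e3]; ring
  have hmom2 : ∀ z, MemLp (f z) 2 μ := fun z =>
    (hmom z).mono_exponent (by norm_num)
  have haux := fun i => aux_sq_sum f hindep hmom2 hmean (cmat i)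
  -- variances of the noise family
  set var : (Fin N ⊕ Fin N ⊕ Fin N × Fin p2) → ℝ :=
    Sum.elim (fun _ => σ02) (Sum.elim (fun _ => lam2) (fun _ => lamx2)) with hvardef
  have hvar : ∀ z, ∫ ω, (f z ω) ^ 2 ∂μ = var z := by
    rintro (j | j | q)
    · simpa [hf, noiseFam, hvardef] using hEvar j
    · simpa [hf, noiseFam, hvardef] using hepsvar j
    · simpa [hf, noiseFam, hvardef] using hExvar q.1 q.2
  -- per-row variance sum
  have hrow : ∀ i, (∑ z, (cmat i z) ^ 2 * ∫ ω, (f z ω) ^ 2 ∂μ)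
      = σ02 + lam2 * (∑ j, S0 i j ^ 2) + lamx2 * (∑ k, β0 (Sum.inr k) ^ 2) := by
    intro i
    simp_rw [hvar]
    rw [Fintype.sum_sum_type, Fintype.sum_sum_type]
    have e1 : (∑ j, (cmat i (Sum.inl j)) ^ 2 * var (Sum.inl j)) = σ02 := by
      simp [hcmat, hvardef, apply_ite (fun x : ℝ => x ^ 2)]
    have e2 : (∑ j, (cmat i (Sum.inr (Sum.inl j))) ^ 2 * var (Sum.inr (Sum.inl j)))
        = lam2 * (∑ j, S0 i j ^ 2) := by
      simp [hcmat, hvardef, Finset.mul_sum, mul_comm]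
    have e3 : (∑ q : Fin N × Fin p2, (cmat i (Sum.inr (Sum.inr q))) ^ 2 * var (Sum.inr (Sum.inr q)))
        = lamx2 * (∑ k, β0 (Sum.inr k) ^ 2) := by
      rw [Fintype.sum_prod_type]
      rw [Finset.sum_eq_single i]
      · simp [hcmat, hvardef, Finset.mul_sum, mul_comm]
      · intro j _ hj
        simp [hcmat, hvardef, hj]
      · simp
    rw [e1, e2, e3]; ring
  -- trace identity
  have htr : Matrix.trace (Smat W ρ0 * (Smat W ρ0)ᵀ) = ∑ i, ∑ j, S0 i j ^ 2 := by
    simp [Matrix.trace, Matrix.mul_apply, Matrix.diag, sq, ← hS0def]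
  -- the integrand as a sum of squares
  have hdot : ∀ ω,
      ((Smat W ρ0 *ᵥ Yobs W ρ0 X β0 (E ω) (ε ω) - Xobs X (Ex ω) *ᵥ β0) ⬝ᵥ
        (Smat W ρ0 *ᵥ Yobs W ρ0 X β0 (E ω) (ε ω) - Xobs X (Ex ω) *ᵥ β0))
      = ∑ i, (∑ z, cmat i z * f z ω) ^ 2 := by
    intro ω
    rw [dotProduct]
    exact Finset.sum_congr rfl fun i _ => by rw [hres ω i, sq]
  have hQint : Integrable (fun ω =>
      (Smat W ρ0 *ᵥ Yobs W ρ0 X β0 (E ω) (ε ω) - Xobs X (Ex ω) *ᵥ β0) ⬝ᵥ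
        (Smat W ρ0 *ᵥ Yobs W ρ0 X β0 (E ω) (ε ω) - Xobs X (Ex ω) *ᵥ β0)) μ := by
    have : Integrable (fun ω => ∑ i, (∑ z, cmat i z * f z ω) ^ 2) μ :=
      integrable_finset_sum _ fun i _ => (haux i).1
    exact this.congr (Filter.Eventually.of_forall fun ω => (hdot ω).symm)
  have part1 : (∫ ω, (Smat W ρ0 *ᵥ Yobs W ρ0 X β0 (E ω) (ε ω) - Xobs X (Ex ω) *ᵥ β0) ⬝ᵥ
        (Smat W ρ0 *ᵥ Yobs W ρ0 X β0 (E ω) (ε ω) - Xobs X (Ex ω) *ᵥ β0) ∂μ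
      = N * σ02 + lam2 * Matrix.trace (Smat W ρ0 * (Smat W ρ0)ᵀ)
          + N * lamx2 * (∑ k, β0 (Sum.inr k) ^ 2)) := by
    calc ∫ ω, (Smat W ρ0 *ᵥ Yobs W ρ0 X β0 (E ω) (ε ω) - Xobs X (Ex ω) *ᵥ β0) ⬝ᵥ
          (Smat W ρ0 *ᵥ Yobs W ρ0 X β0 (E ω) (ε ω) - Xobs X (Ex ω) *ᵥ β0) ∂μ
        = ∫ ω, ∑ i, (∑ z, cmat i z * f z ω) ^ 2 ∂μ := by
          congr 1; funext ω; exact hdot ω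
      _ = ∑ i, ∫ ω, (∑ z, cmat i z * f z ω) ^ 2 ∂μ :=
          integral_finset_sum _ fun i _ => (haux i).1
      _ = ∑ i : Fin N, (σ02 + lam2 * (∑ j, S0 i j ^ 2)
            + lamx2 * (∑ k, β0 (Sum.inr k) ^ 2)) := by
          exact Finset.sum_congr rfl fun i _ => by rw [(haux i).2, hrow i]
      _ = N * σ02 + lam2 * Matrix.trace (Smat W ρ0 * (Smat W ρ0)ᵀ)
            + N * lamx2 * (∑ k, β0 (Sum.inr k) ^ 2) := by
          rw [htr]
          simp [Finset.sum_add_distrib, Finset.mul_sum, Finset.card_univ]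
          ring
  refine ⟨part1, ?_⟩
  have hNne : (N : ℝ) ≠ 0 := Nat.cast_ne_zero.mpr hN.ne'
  set t := lam2 * Matrix.trace (Smat W ρ0 * (Smat W ρ0)ᵀ) with ht
  set d := lamx2 * (∑ k, β0 (Sum.inr k) ^ 2) with hd
  have hint2 : Integrable (fun ω =>
      (N : ℝ)⁻¹ * ((Smat W ρ0 *ᵥ Yobs W ρ0 X β0 (E ω) (ε ω) - Xobs X (Ex ω) *ᵥ β0) ⬝ᵥ
        (Smat W ρ0 *ᵥ Yobs W ρ0 X β0 (E ω) (ε ω) - Xobs X (Ex ω) *ᵥ β0) - t)) μ :=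
    (hQint.sub (integrable_const t)).const_mul _
  rw [integral_sub hint2 (integrable_const d), integral_const, integral_const_mul,
    integral_sub hQint (integrable_const t), integral_const, part1]
  simp only [measure_univ, probReal_univ, ENNReal.toReal_one, smul_eq_mul, one_mul]
  field_simp
  ring

end PSAR
end

section
/- With the true response Y and true covariate matrix X, the gradient of the least squares objective has mean zero at the true parameter: the gradient ∇_γ L_LS(γ) exists at γ0 = (ρ0, β0ᵀ)ᵀ and E[∇_γ L_LS(γ0)] = 0 ∈ ℝ^{p+1}. -/
open MeasureTheory ProbabilityTheory Matrix
open scoped Matrix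

namespace PSAR

/-! ### Auxiliary lemmas -/

section Aux

variable {N : ℕ} {W : Matrix (Fin N) (Fin N) ℝ}

lemma Smat_apply (ρ : ℝ) (k i : Fin N) :
    Smat W ρ k i = (if k = i then 1 else 0) - ρ * W k i := by
  simp [Smat, Matrix.sub_apply, Matrix.one_apply, Matrix.smul_apply]

lemma StS_diag (hW : ∀ i, W i i = 0) (ρ : ℝ) (i : Fin N) :
    ((Smat W ρ)ᵀ * Smat W ρ) i i = 1 + ρ ^ 2 * ∑ k, (W k i) ^ 2 := by
  simp only [Matrix.mul_apply, Matrix.transpose_apply, Smat_apply]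
  have : ∀ k : Fin N, ((if k = i then (1:ℝ) else 0) - ρ * W k i) *
      ((if k = i then (1:ℝ) else 0) - ρ * W k i)
      = (if k = i then (1:ℝ) else 0) - 2 * ρ * (if k = i then W k i else 0)
        + ρ ^ 2 * (W k i) ^ 2 := by
    intro k; by_cases h : k = i <;> simp [h] <;> ring
  rw [Finset.sum_congr rfl fun k _ => this k]
  rw [Finset.sum_add_distrib, Finset.sum_sub_distrib]
  simp [hW i, Finset.mul_sum]

lemma StS_base_pos (ρ : ℝ) (i : Fin N) :
    0 < 1 + ρ ^ 2 * ∑ k, (W k i) ^ 2 := by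
  have h1 : (0:ℝ) ≤ ρ ^ 2 * ∑ k, (W k i) ^ 2 :=
    mul_nonneg (sq_nonneg _) (Finset.sum_nonneg fun k _ => sq_nonneg _)
  linarith

/-- `lsObj` written as an explicit finite sum of squares. -/
lemma lsObj_eq {p1 p2 : ℕ} (hW : ∀ i, W i i = 0)
    (X : Matrix (Fin N) (Fin p1 ⊕ Fin p2) ℝ) (Y : Fin N → ℝ) (ρ : ℝ)
    (β : Fin p1 ⊕ Fin p2 → ℝ) :
    lsObj W X Y ρ β = ∑ i, ((1 + ρ ^ 2 * ∑ k, (W k i) ^ 2)⁻¹ *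
      ∑ k, ((if k = i then 1 else 0) - ρ * W k i) *
        ((∑ j, ((if k = j then 1 else 0) - ρ * W k j) * Y j) - ∑ j, X k j * β j)) ^ 2 := by
  unfold lsObj
  rw [dotProduct]
  refine Finset.sum_congr rfl fun i _ => ?_
  rw [← sq]
  congr 1
  rw [Matrix.mulVec, dotProduct]
  have hd : ∀ j, (dmat W ρ * (Smat W ρ)ᵀ) i j
      = (1 + ρ ^ 2 * ∑ k, (W k i) ^ 2)⁻¹ * Smat W ρ j i := by
    intro j
    rw [dmat, Matrix.diagonal_mul, Matrix.transpose_apply, StS_diag hW]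
  simp only [hd, Matrix.sub_apply, Pi.sub_apply, Matrix.mulVec, dotProduct, Smat_apply,
    Finset.mul_sum]
  exact Finset.sum_congr rfl fun k _ => by ring

end Aux

section Aux2

variable {N p1 p2 : ℕ} {W : Matrix (Fin N) (Fin N) ℝ}

lemma Smat_mulVec_Ytrue (ρ0 : ℝ) (hdet : IsUnit (Smat W ρ0).det)
    (X : Matrix (Fin N) (Fin p1 ⊕ Fin p2) ℝ) (β0 : Fin p1 ⊕ Fin p2 → ℝ)
    (Ev : Fin N → ℝ) :
    Smat W ρ0 *ᵥ Ytrue W ρ0 X β0 Ev = X *ᵥ β0 + Ev := by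
  unfold Ytrue
  rw [Matrix.mulVec_mulVec, Matrix.mul_nonsing_inv _ hdet, Matrix.one_mulVec]

lemma resid_at_true (ρ0 : ℝ) (hdet : IsUnit (Smat W ρ0).det)
    (X : Matrix (Fin N) (Fin p1 ⊕ Fin p2) ℝ) (β0 : Fin p1 ⊕ Fin p2 → ℝ)
    (Ev : Fin N → ℝ) (k : Fin N) :
    (∑ j, Smat W ρ0 k j * Ytrue W ρ0 X β0 Ev j) - ∑ j, X k j * β0 j = Ev k := by
  have h := congrFun (Smat_mulVec_Ytrue ρ0 hdet X β0 Ev) k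
  simp only [Matrix.mulVec, dotProduct, Pi.add_apply] at h
  linarith

lemma Ytrue_decomp (ρ0 : ℝ)
    (X : Matrix (Fin N) (Fin p1 ⊕ Fin p2) ℝ) (β0 : Fin p1 ⊕ Fin p2 → ℝ)
    (Ev : Fin N → ℝ) (j : Fin N) :
    Ytrue W ρ0 X β0 Ev j
      = (∑ l, (Smat W ρ0)⁻¹ j l * (∑ m, X l m * β0 m)) +
        ∑ l, (Smat W ρ0)⁻¹ j l * Ev l := by
  unfold Ytrue
  simp only [Matrix.mulVec, dotProduct, Pi.add_apply, mul_add]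
  rw [Finset.sum_add_distrib]

lemma inv_mul_entry (ρ0 : ℝ) (hdet : IsUnit (Smat W ρ0).det) (j i : Fin N) :
    ∑ l, (Smat W ρ0)⁻¹ j l * Smat W ρ0 l i = if j = i then 1 else 0 := by
  have h := Matrix.nonsing_inv_mul _ hdet
  have := congrFun (congrFun h j) i
  rw [Matrix.mul_apply] at this
  rw [this, Matrix.one_apply]

end Aux2

section Aux3

variable {N p1 p2 : ℕ}

/-- `c i = ∑ₖ W k i ^ 2`. -/
noncomputable def cW {N : ℕ} (W : Matrix (Fin N) (Fin N) ℝ) (i : Fin N) : ℝ :=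
  ∑ k, (W k i) ^ 2

/-- residual at the true parameter. -/
noncomputable def R0 {N p1 p2 : ℕ} (W : Matrix (Fin N) (Fin N) ℝ)
    (X : Matrix (Fin N) (Fin p1 ⊕ Fin p2) ℝ) (Y : Fin N → ℝ) (ρ0 : ℝ)
    (β0 : Fin p1 ⊕ Fin p2 → ℝ) (k : Fin N) : ℝ :=
  (∑ j, Smat W ρ0 k j * Y j) - ∑ j, X k j * β0 j

noncomputable def Q0 {N p1 p2 : ℕ} (W : Matrix (Fin N) (Fin N) ℝ)
    (X : Matrix (Fin N) (Fin p1 ⊕ Fin p2) ℝ) (Y : Fin N → ℝ) (ρ0 : ℝ)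
    (β0 : Fin p1 ⊕ Fin p2 → ℝ) (i : Fin N) : ℝ :=
  ∑ k, Smat W ρ0 k i * R0 W X Y ρ0 β0 k

noncomputable def Qd {N p1 p2 : ℕ} (W : Matrix (Fin N) (Fin N) ℝ)
    (X : Matrix (Fin N) (Fin p1 ⊕ Fin p2) ℝ) (Y : Fin N → ℝ) (ρ0 : ℝ)
    (β0 : Fin p1 ⊕ Fin p2 → ℝ) (t : ℝ) (b : Fin p1 ⊕ Fin p2 → ℝ) (i : Fin N) : ℝ :=
  ∑ k, (-(t * W k i) * R0 W X Y ρ0 β0 k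
    + Smat W ρ0 k i * ((∑ j, -(t * W k j) * Y j) - ∑ j, X k j * b j))

noncomputable def DD {N : ℕ} (W : Matrix (Fin N) (Fin N) ℝ) (ρ0 : ℝ) (i : Fin N) : ℝ :=
  (1 + ρ0 ^ 2 * cW W i)⁻¹

noncomputable def DDd {N : ℕ} (W : Matrix (Fin N) (Fin N) ℝ) (ρ0 t : ℝ) (i : Fin N) : ℝ :=
  -(2 * ρ0 * t * cW W i) * (DD W ρ0 i) ^ 2

/-- directional derivative of the least squares objective along `(t, b)`. -/
noncomputable def gradLine {N p1 p2 : ℕ} (W : Matrix (Fin N) (Fin N) ℝ)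
    (X : Matrix (Fin N) (Fin p1 ⊕ Fin p2) ℝ) (Y : Fin N → ℝ) (ρ0 : ℝ)
    (β0 : Fin p1 ⊕ Fin p2 → ℝ) (t : ℝ) (b : Fin p1 ⊕ Fin p2 → ℝ) : ℝ :=
  ∑ i, 2 * (DD W ρ0 i * Q0 W X Y ρ0 β0 i) *
    (DDd W ρ0 t i * Q0 W X Y ρ0 β0 i + DD W ρ0 i * Qd W X Y ρ0 β0 t b i)

variable {W : Matrix (Fin N) (Fin N) ℝ}

lemma hasDerivAt_affine (ρ0 t : ℝ) : HasDerivAt (fun s : ℝ => ρ0 + s * t) t 0 := by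
  simpa using ((hasDerivAt_id (0:ℝ)).mul_const t).const_add ρ0

lemma hasDerivAt_base (ρ0 t : ℝ) (ci : ℝ) :
    HasDerivAt (fun s : ℝ => 1 + (ρ0 + s * t) ^ 2 * ci) (2 * ρ0 * t * ci) 0 := by
  have h := (((hasDerivAt_affine ρ0 t).pow 2).mul_const ci).const_add 1
  refine h.congr_deriv (Eq.symm ?_)
  simp only [zero_mul, add_zero, pow_one]
  ring

lemma hasDerivAt_inv_base (ρ0 t : ℝ) (i : Fin N) :
    HasDerivAt (fun s : ℝ => (1 + (ρ0 + s * t) ^ 2 * cW W i)⁻¹)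
      (DDd W ρ0 t i) 0 := by
  have hpos : (1 + (ρ0 + 0 * t) ^ 2 * cW W i) ≠ 0 := by
    have := StS_base_pos (W := W) (ρ0 + 0 * t) i
    simp only [cW]; linarith
  have h := (hasDerivAt_base ρ0 t (cW W i)).inv hpos
  refine h.congr_deriv (Eq.symm ?_)
  simp [DDd, DD, cW, div_eq_mul_inv]
  try ring

lemma hasDerivAt_Q (X : Matrix (Fin N) (Fin p1 ⊕ Fin p2) ℝ) (Y : Fin N → ℝ)
    (ρ0 : ℝ) (β0 : Fin p1 ⊕ Fin p2 → ℝ) (t : ℝ) (b : Fin p1 ⊕ Fin p2 → ℝ) (i : Fin N) :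
    HasDerivAt (fun s : ℝ => ∑ k, ((if k = i then 1 else 0) - (ρ0 + s * t) * W k i) *
        ((∑ j, ((if k = j then 1 else 0) - (ρ0 + s * t) * W k j) * Y j)
          - ∑ j, X k j * (β0 j + s * b j)))
      (Qd W X Y ρ0 β0 t b i) 0 := by
  unfold Qd
  apply HasDerivAt.fun_sum
  intro k _
  have hA : HasDerivAt (fun s : ℝ => (if k = i then (1:ℝ) else 0) - (ρ0 + s * t) * W k i)
      (-(t * W k i)) 0 := by
    simpa using (((hasDerivAt_affine ρ0 t).mul_const (W k i)).const_sub
      (if k = i then (1:ℝ) else 0))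
  have hR : HasDerivAt (fun s : ℝ => (∑ j, ((if k = j then 1 else 0) - (ρ0 + s * t) * W k j) * Y j)
      - ∑ j, X k j * (β0 j + s * b j))
      ((∑ j, -(t * W k j) * Y j) - ∑ j, X k j * b j) 0 := by
    apply HasDerivAt.sub
    · apply HasDerivAt.fun_sum
      intro j _
      have : HasDerivAt (fun s : ℝ => (if k = j then (1:ℝ) else 0) - (ρ0 + s * t) * W k j)
          (-(t * W k j)) 0 := by
        simpa using (((hasDerivAt_affine ρ0 t).mul_const (W k j)).const_sub
          (if k = j then (1:ℝ) else 0))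
      exact this.mul_const (Y j)
    · apply HasDerivAt.fun_sum
      intro j _
      have : HasDerivAt (fun s : ℝ => β0 j + s * b j) (b j) 0 := hasDerivAt_affine _ _
      exact this.const_mul (X k j)
  have h := hA.mul hR
  refine h.congr_deriv (Eq.symm ?_)
  simp only [zero_mul, add_zero, mul_zero, R0, Smat_apply]

lemma hasDerivAt_line (hW : ∀ i, W i i = 0)
    (X : Matrix (Fin N) (Fin p1 ⊕ Fin p2) ℝ) (Y : Fin N → ℝ)
    (ρ0 : ℝ) (β0 : Fin p1 ⊕ Fin p2 → ℝ) (t : ℝ) (b : Fin p1 ⊕ Fin p2 → ℝ) :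
    HasDerivAt (fun s : ℝ => lsObj W X Y (ρ0 + s * t) (fun j => β0 j + s * b j))
      (gradLine W X Y ρ0 β0 t b) 0 := by
  have hrw : (fun s : ℝ => lsObj W X Y (ρ0 + s * t) (fun j => β0 j + s * b j))
      = fun s : ℝ => ∑ i, ((1 + (ρ0 + s * t) ^ 2 * cW W i)⁻¹ *
          ∑ k, ((if k = i then 1 else 0) - (ρ0 + s * t) * W k i) *
            ((∑ j, ((if k = j then 1 else 0) - (ρ0 + s * t) * W k j) * Y j)
              - ∑ j, X k j * (β0 j + s * b j))) ^ 2 := by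
    funext s
    exact lsObj_eq hW X Y _ _
  rw [hrw]
  unfold gradLine
  apply HasDerivAt.fun_sum
  intro i _
  have h := ((hasDerivAt_inv_base (W := W) ρ0 t i).mul
      (hasDerivAt_Q (W := W) X Y ρ0 β0 t b i)).pow 2
  refine h.congr_deriv (Eq.symm ?_)
  have h1 : (1 + (ρ0 + 0 * t) ^ 2 * cW W i)⁻¹ = DD W ρ0 i := by
    simp [DD]
  have h2 : (∑ k, ((if k = i then (1:ℝ) else 0) - (ρ0 + 0 * t) * W k i) *
      ((∑ j, ((if k = j then 1 else 0) - (ρ0 + 0 * t) * W k j) * Y j)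
        - ∑ j, X k j * (β0 j + 0 * b j))) = Q0 W X Y ρ0 β0 i := by
    simp only [zero_mul, add_zero, Q0, R0, Smat_apply]
  simp only [Pi.mul_apply]
  rw [h1, h2]
  ring

end Aux3

section Aux4

variable {N p1 p2 : ℕ} {W : Matrix (Fin N) (Fin N) ℝ}

lemma differentiableAt_lsObj (hW : ∀ i, W i i = 0)
    (X : Matrix (Fin N) (Fin p1 ⊕ Fin p2) ℝ) (Y : Fin N → ℝ)
    (ρ0 : ℝ) (β0 : Fin p1 ⊕ Fin p2 → ℝ) :
    DifferentiableAt ℝ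
      (fun γ : ℝ × ((Fin p1 ⊕ Fin p2) → ℝ) => lsObj W X Y γ.1 γ.2) (ρ0, β0) := by
  have hrw : (fun γ : ℝ × ((Fin p1 ⊕ Fin p2) → ℝ) => lsObj W X Y γ.1 γ.2)
      = fun γ : ℝ × ((Fin p1 ⊕ Fin p2) → ℝ) =>
        ∑ i, ((1 + γ.1 ^ 2 * ∑ k, (W k i) ^ 2)⁻¹ *
          ∑ k, ((if k = i then 1 else 0) - γ.1 * W k i) *
            ((∑ j, ((if k = j then 1 else 0) - γ.1 * W k j) * Y j)
              - ∑ j, X k j * γ.2 j)) ^ 2 := by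
    funext γ
    exact lsObj_eq hW X Y _ _
  rw [hrw]
  apply DifferentiableAt.fun_sum
  intro i _
  apply DifferentiableAt.pow
  apply DifferentiableAt.mul
  · apply DifferentiableAt.inv
    · exact ((differentiableAt_fst.pow 2).mul_const _).const_add 1
    · exact ne_of_gt (StS_base_pos _ _)
  · apply DifferentiableAt.fun_sum
    intro k _
    apply DifferentiableAt.mul
    · exact (differentiableAt_fst.mul_const _).const_sub _
    · apply DifferentiableAt.sub
      · apply DifferentiableAt.fun_sum
        intro j _
        exact ((differentiableAt_fst.mul_const _).const_sub _).mul_const _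
      · apply DifferentiableAt.fun_sum
        intro j _
        exact DifferentiableAt.const_mul
          ((ContinuousLinearMap.proj (R := ℝ) (φ := fun _ : Fin p1 ⊕ Fin p2 => ℝ)
            j).differentiableAt.comp _ differentiableAt_snd) _

lemma fderiv_lsObj_apply (hW : ∀ i, W i i = 0)
    (X : Matrix (Fin N) (Fin p1 ⊕ Fin p2) ℝ) (Y : Fin N → ℝ)
    (ρ0 : ℝ) (β0 : Fin p1 ⊕ Fin p2 → ℝ) (v : ℝ × ((Fin p1 ⊕ Fin p2) → ℝ)) :
    fderiv ℝ (fun γ : ℝ × ((Fin p1 ⊕ Fin p2) → ℝ) => lsObj W X Y γ.1 γ.2) (ρ0, β0) v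
      = gradLine W X Y ρ0 β0 v.1 v.2 := by
  set f := fun γ : ℝ × ((Fin p1 ⊕ Fin p2) → ℝ) => lsObj W X Y γ.1 γ.2 with hf
  have hdiff := differentiableAt_lsObj hW X Y ρ0 β0
  have hline : HasDerivAt (fun s : ℝ => (ρ0, β0) + s • v) v 0 := by
    simpa using ((hasDerivAt_id (0:ℝ)).smul_const v).const_add (ρ0, β0)
  have h0 : (ρ0, β0) + (0:ℝ) • v = (ρ0, β0) := by simp
  have hcomp : HasDerivAt (fun s : ℝ => f ((ρ0, β0) + s • v))
      (fderiv ℝ f (ρ0, β0) v) 0 := by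
    have hfd : HasFDerivAt f (fderiv ℝ f (ρ0, β0)) ((fun s : ℝ => (ρ0, β0) + s • v) 0) := by
      rw [show (fun s : ℝ => (ρ0, β0) + s • v) 0 = (ρ0, β0) from h0]
      exact hdiff.hasFDerivAt
    exact hfd.comp_hasDerivAt 0 hline
  have heq : (fun s : ℝ => f ((ρ0, β0) + s • v))
      = fun s : ℝ => lsObj W X Y (ρ0 + s * v.1) (fun j => β0 j + s * v.2 j) := by
    funext s
    have h1 : ((ρ0, β0) + s • v).1 = ρ0 + s * v.1 := by simp
    have h2 : ((ρ0, β0) + s • v).2 = fun j => β0 j + s * v.2 j := by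
      funext j; simp
    simp only [hf]
    rw [h1, h2]
  rw [heq] at hcomp
  exact hcomp.unique (hasDerivAt_line hW X Y ρ0 β0 v.1 v.2)

end Aux4

section Aux5

variable {Ωs : Type*} [MeasurableSpace Ωs] {μ : Measure Ωs} [IsProbabilityMeasure μ]
variable {N : ℕ} {E : Ωs → Fin N → ℝ} {σ02 : ℝ}

lemma integrable_mul_E (hE2 : ∀ k, MemLp (fun ω => E ω k) 2 μ) (k l : Fin N) :
    Integrable (fun ω => E ω k * E ω l) μ := by
  have h := ((hE2 l).smul (hE2 k)
    (p := 2) (q := 2) (r := 1)).integrable le_rfl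
  exact h

lemma integral_mul_E (hE2 : ∀ k, MemLp (fun ω => E ω k) 2 μ)
    (hmean0 : ∀ k, ∫ ω, E ω k ∂μ = 0)
    (hvar : ∀ k, ∫ ω, (E ω k) ^ 2 ∂μ = σ02)
    (hpair : ∀ k l, k ≠ l → IndepFun (fun ω => E ω k) (fun ω => E ω l) μ)
    (k l : Fin N) :
    ∫ ω, E ω k * E ω l ∂μ = if k = l then σ02 else 0 := by
  by_cases h : k = l
  · subst h
    simp only [if_pos rfl]
    rw [← hvar k]
    congr 1; funext ω; ring
  · rw [if_neg h]
    have hint : ∫ ω, ((fun ω => E ω k) * fun ω => E ω l) ω ∂μ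
        = (∫ ω, E ω k ∂μ) * ∫ ω, E ω l ∂μ :=
      (hpair k l h).integral_mul_eq_mul_integral
        ((hE2 k).integrable one_le_two).aestronglyMeasurable ((hE2 l).integrable one_le_two).aestronglyMeasurable
    simpa [hmean0 k, hmean0 l] using hint

lemma quad_expand_s11 (v w : Fin N → ℝ) (q : ℝ) (ω : Ωs) :
    (∑ k, v k * E ω k) * (q + ∑ l, w l * E ω l)
      = ∑ k, (v k * q * E ω k + ∑ l, (v k * w l) * (E ω k * E ω l)) := by
  rw [mul_add, Finset.sum_mul, Finset.sum_mul_sum, ← Finset.sum_add_distrib]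
  refine Finset.sum_congr rfl fun k _ => ?_
  congr 1
  · ring
  · exact Finset.sum_congr rfl fun l _ => by ring

lemma integrable_quad (hE2 : ∀ k, MemLp (fun ω => E ω k) 2 μ)
    (v w : Fin N → ℝ) (q : ℝ) :
    Integrable (fun ω => (∑ k, v k * E ω k) * (q + ∑ l, w l * E ω l)) μ := by
  have : (fun ω => (∑ k, v k * E ω k) * (q + ∑ l, w l * E ω l))
      = fun ω => ∑ k, (v k * q * E ω k + ∑ l, (v k * w l) * (E ω k * E ω l)) := by
    funext ω; exact quad_expand_s11 v w q ω
  rw [this]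
  apply integrable_finset_sum
  intro k _
  exact (((hE2 k).integrable one_le_two).const_mul _).add
    (integrable_finset_sum _ fun l _ => (integrable_mul_E hE2 k l).const_mul _)

lemma integral_quad (hE2 : ∀ k, MemLp (fun ω => E ω k) 2 μ)
    (hmean0 : ∀ k, ∫ ω, E ω k ∂μ = 0)
    (hvar : ∀ k, ∫ ω, (E ω k) ^ 2 ∂μ = σ02)
    (hpair : ∀ k l, k ≠ l → IndepFun (fun ω => E ω k) (fun ω => E ω l) μ)
    (v w : Fin N → ℝ) (q : ℝ) :
    ∫ ω, (∑ k, v k * E ω k) * (q + ∑ l, w l * E ω l) ∂μ = σ02 * ∑ k, v k * w k := by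
  have hrw : (fun ω => (∑ k, v k * E ω k) * (q + ∑ l, w l * E ω l))
      = fun ω => ∑ k, (v k * q * E ω k + ∑ l, (v k * w l) * (E ω k * E ω l)) := by
    funext ω; exact quad_expand_s11 v w q ω
  rw [hrw]
  have hint : ∀ k : Fin N, Integrable
      (fun ω => v k * q * E ω k + ∑ l, (v k * w l) * (E ω k * E ω l)) μ := fun k =>
    (((hE2 k).integrable one_le_two).const_mul _).add
      (integrable_finset_sum _ fun l _ => (integrable_mul_E hE2 k l).const_mul _)
  rw [integral_finset_sum Finset.univ fun k _ => hint k]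
  have hterm : ∀ k : Fin N,
      ∫ ω, (v k * q * E ω k + ∑ l, (v k * w l) * (E ω k * E ω l)) ∂μ
        = σ02 * (v k * w k) := by
    intro k
    rw [integral_add (((hE2 k).integrable one_le_two).const_mul _)
      (integrable_finset_sum _ fun l _ => (integrable_mul_E hE2 k l).const_mul _ :
        Integrable (fun ω => ∑ l, (v k * w l) * (E ω k * E ω l)) μ)]
    rw [integral_const_mul, hmean0 k, mul_zero,
      integral_finset_sum _ fun l _ => ((integrable_mul_E hE2 k l).const_mul _ :
        Integrable (fun ω => (v k * w l) * (E ω k * E ω l)) μ)]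
    have : ∀ l : Fin N, ∫ ω, (v k * w l) * (E ω k * E ω l) ∂μ
        = (v k * w l) * (if k = l then σ02 else 0) := by
      intro l
      rw [integral_const_mul, integral_mul_E hE2 hmean0 hvar hpair k l]
    rw [Finset.sum_congr rfl fun l _ => this l]
    simp [Finset.sum_ite_eq, mul_comm]
  rw [Finset.sum_congr rfl fun k _ => hterm k, ← Finset.mul_sum]

end Aux5

section Aux6

variable {N p1 p2 : ℕ} {W : Matrix (Fin N) (Fin N) ℝ}

noncomputable def wIdef {N : ℕ} (W : Matrix (Fin N) (Fin N) ℝ) (ρ0 t : ℝ)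
    (i l : Fin N) : ℝ :=
  2 * DD W ρ0 i * DDd W ρ0 t i * Smat W ρ0 l i
    + 2 * (DD W ρ0 i) ^ 2 * (-(t * W l i)
      + ∑ k, Smat W ρ0 k i * ∑ j, -(t * W k j) * (Smat W ρ0)⁻¹ j l)

noncomputable def qIdef {N p1 p2 : ℕ} (W : Matrix (Fin N) (Fin N) ℝ)
    (X : Matrix (Fin N) (Fin p1 ⊕ Fin p2) ℝ) (ρ0 : ℝ) (β0 : Fin p1 ⊕ Fin p2 → ℝ)
    (t : ℝ) (b : Fin p1 ⊕ Fin p2 → ℝ) (i : Fin N) : ℝ :=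
  2 * (DD W ρ0 i) ^ 2 * (∑ k, Smat W ρ0 k i *
    ((∑ j, -(t * W k j) * (∑ l, (Smat W ρ0)⁻¹ j l * (∑ m, X l m * β0 m)))
      - ∑ j, X k j * b j))

lemma triple_swap {n : ℕ} (S : Fin n → ℝ) (c : Fin n → Fin n → ℝ)
    (B : Fin n → Fin n → ℝ) (Ev : Fin n → ℝ) :
    ∑ k, S k * ∑ j, c k j * ∑ l, B j l * Ev l
      = ∑ l, (∑ k, S k * ∑ j, c k j * B j l) * Ev l := by
  simp only [Finset.mul_sum, Finset.sum_mul]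
  conv_rhs => rw [Finset.sum_comm]
  refine Finset.sum_congr rfl fun k _ => ?_
  conv_rhs => rw [Finset.sum_comm]
  exact Finset.sum_congr rfl fun j _ => Finset.sum_congr rfl fun l _ => by ring

lemma Q0_at_true (hdet : IsUnit (Smat W ρ0).det)
    (X : Matrix (Fin N) (Fin p1 ⊕ Fin p2) ℝ) (β0 : Fin p1 ⊕ Fin p2 → ℝ)
    (Ev : Fin N → ℝ) (i : Fin N) :
    Q0 W X (Ytrue W ρ0 X β0 Ev) ρ0 β0 i = ∑ k, Smat W ρ0 k i * Ev k := by
  unfold Q0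
  exact Finset.sum_congr rfl fun k _ => by
    rw [R0, resid_at_true ρ0 hdet X β0 Ev k]

lemma Qd_decomp (ρ0 : ℝ) (hdet : IsUnit (Smat W ρ0).det)
    (X : Matrix (Fin N) (Fin p1 ⊕ Fin p2) ℝ) (β0 : Fin p1 ⊕ Fin p2 → ℝ)
    (t : ℝ) (b : Fin p1 ⊕ Fin p2 → ℝ) (Ev : Fin N → ℝ) (i : Fin N) :
    Qd W X (Ytrue W ρ0 X β0 Ev) ρ0 β0 t b i
      = (∑ l, -(t * W l i) * Ev l)
        + (∑ l, (∑ k, Smat W ρ0 k i * ∑ j, -(t * W k j) * (Smat W ρ0)⁻¹ j l) * Ev l)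
        + ∑ k, Smat W ρ0 k i *
            ((∑ j, -(t * W k j) * (∑ l, (Smat W ρ0)⁻¹ j l * (∑ m, X l m * β0 m)))
              - ∑ j, X k j * b j) := by
  unfold Qd
  have hY : ∀ j, Ytrue W ρ0 X β0 Ev j
      = (∑ l, (Smat W ρ0)⁻¹ j l * (∑ m, X l m * β0 m)) +
        ∑ l, (Smat W ρ0)⁻¹ j l * Ev l := fun j => Ytrue_decomp ρ0 X β0 Ev j
  have hterm : ∀ k, -(t * W k i) * R0 W X (Ytrue W ρ0 X β0 Ev) ρ0 β0 k
      + Smat W ρ0 k i * ((∑ j, -(t * W k j) * Ytrue W ρ0 X β0 Ev j) - ∑ j, X k j * b j)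
      = -(t * W k i) * Ev k
        + Smat W ρ0 k i * ∑ j, -(t * W k j) * ∑ l, (Smat W ρ0)⁻¹ j l * Ev l
        + Smat W ρ0 k i *
            ((∑ j, -(t * W k j) * (∑ l, (Smat W ρ0)⁻¹ j l * (∑ m, X l m * β0 m)))
              - ∑ j, X k j * b j) := by
    intro k
    rw [R0, resid_at_true ρ0 hdet X β0 Ev k]
    have : (∑ j, -(t * W k j) * Ytrue W ρ0 X β0 Ev j)
        = (∑ j, -(t * W k j) * (∑ l, (Smat W ρ0)⁻¹ j l * (∑ m, X l m * β0 m)))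
          + ∑ j, -(t * W k j) * ∑ l, (Smat W ρ0)⁻¹ j l * Ev l := by
      rw [← Finset.sum_add_distrib]
      refine Finset.sum_congr rfl fun j _ => ?_
      rw [hY j]; ring
    rw [this]; ring
  rw [Finset.sum_congr rfl fun k _ => hterm k]
  rw [Finset.sum_add_distrib, Finset.sum_add_distrib]
  congr 1
  congr 1
  exact triple_swap (fun k => Smat W ρ0 k i) (fun k j => -(t * W k j))
    (fun j l => (Smat W ρ0)⁻¹ j l) Ev

lemma gradLine_decomp (hW : ∀ i, W i i = 0) (ρ0 : ℝ) (hdet : IsUnit (Smat W ρ0).det)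
    (X : Matrix (Fin N) (Fin p1 ⊕ Fin p2) ℝ) (β0 : Fin p1 ⊕ Fin p2 → ℝ)
    (t : ℝ) (b : Fin p1 ⊕ Fin p2 → ℝ) (Ev : Fin N → ℝ) :
    gradLine W X (Ytrue W ρ0 X β0 Ev) ρ0 β0 t b
      = ∑ i, (∑ k, Smat W ρ0 k i * Ev k) *
          (qIdef W X ρ0 β0 t b i + ∑ l, wIdef W ρ0 t i l * Ev l) := by
  unfold gradLine
  refine Finset.sum_congr rfl fun i _ => ?_
  rw [Q0_at_true hdet X β0 Ev i, Qd_decomp ρ0 hdet X β0 t b Ev i]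
  have hw : ∑ l, wIdef W ρ0 t i l * Ev l
      = 2 * DD W ρ0 i * DDd W ρ0 t i * (∑ l, Smat W ρ0 l i * Ev l)
        + 2 * (DD W ρ0 i) ^ 2 * ((∑ l, -(t * W l i) * Ev l)
          + ∑ l, (∑ k, Smat W ρ0 k i * ∑ j, -(t * W k j) * (Smat W ρ0)⁻¹ j l) * Ev l) := by
    conv_rhs => rw [mul_add, Finset.mul_sum, Finset.mul_sum, Finset.mul_sum,
      ← Finset.sum_add_distrib, ← Finset.sum_add_distrib]
    refine Finset.sum_congr rfl fun l _ => ?_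
    rw [wIdef]; ring
  rw [hw, qIdef]
  have hu : (∑ k, Smat W ρ0 k i * Ev k) = ∑ l, Smat W ρ0 l i * Ev l := rfl
  rw [hu]
  ring

lemma sum_S_sq (hW : ∀ i, W i i = 0) (ρ0 : ℝ) (i : Fin N) :
    ∑ l, Smat W ρ0 l i * Smat W ρ0 l i = 1 + ρ0 ^ 2 * cW W i := by
  have h := StS_diag hW ρ0 i
  rw [Matrix.mul_apply] at h
  simpa [Matrix.transpose_apply, cW] using h

lemma sum_S_W (hW : ∀ i, W i i = 0) (ρ0 : ℝ) (i : Fin N) :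
    ∑ l, Smat W ρ0 l i * W l i = -(ρ0 * cW W i) := by
  simp only [Smat_apply, sub_mul]
  rw [Finset.sum_sub_distrib]
  have h1 : ∑ l, (if l = i then (1:ℝ) else 0) * W l i = 0 := by
    simp [Finset.sum_ite_eq, hW i]
  have h2 : ∑ l, ρ0 * W l i * W l i = ρ0 * cW W i := by
    rw [cW, Finset.mul_sum]
    exact Finset.sum_congr rfl fun l _ => by ring
  rw [h1, h2]; ring

lemma sum_G_S (ρ0 t : ℝ) (hdet : IsUnit (Smat W ρ0).det) (hW : ∀ i, W i i = 0) (i : Fin N) :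
    ∑ l, (∑ k, Smat W ρ0 k i * ∑ j, -(t * W k j) * (Smat W ρ0)⁻¹ j l) * Smat W ρ0 l i
      = t * (ρ0 * cW W i) := by
  rw [← triple_swap (fun k => Smat W ρ0 k i) (fun k j => -(t * W k j))
    (fun j l => (Smat W ρ0)⁻¹ j l) (fun l => Smat W ρ0 l i)]
  have hent : ∀ k, (∑ j, -(t * W k j) * ∑ l, (Smat W ρ0)⁻¹ j l * Smat W ρ0 l i)
      = -(t * W k i) := by
    intro k
    have : ∀ j : Fin N, -(t * W k j) * (∑ l, (Smat W ρ0)⁻¹ j l * Smat W ρ0 l i)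
        = -(t * W k j) * (if j = i then 1 else 0) := by
      intro j; rw [inv_mul_entry ρ0 hdet j i]
    rw [Finset.sum_congr rfl fun j _ => this j]
    simp [Finset.sum_ite_eq, mul_ite]
  rw [Finset.sum_congr rfl fun k _ => by rw [hent k]]
  have h2 : ∑ k, Smat W ρ0 k i * -(t * W k i) = -t * ∑ k, Smat W ρ0 k i * W k i := by
    rw [Finset.mul_sum]
    exact Finset.sum_congr rfl fun k _ => by ring
  rw [h2, sum_S_W hW ρ0 i]
  ring

lemma sum_vw_zero (hW : ∀ i, W i i = 0) (ρ0 t : ℝ) (hdet : IsUnit (Smat W ρ0).det)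
    (i : Fin N) :
    ∑ l, Smat W ρ0 l i * wIdef W ρ0 t i l = 0 := by
  have hsplit : ∑ l, Smat W ρ0 l i * wIdef W ρ0 t i l
      = 2 * DD W ρ0 i * DDd W ρ0 t i * (∑ l, Smat W ρ0 l i * Smat W ρ0 l i)
        + 2 * (DD W ρ0 i) ^ 2 * (-t) * (∑ l, Smat W ρ0 l i * W l i)
        + 2 * (DD W ρ0 i) ^ 2 *
          ∑ l, (∑ k, Smat W ρ0 k i * ∑ j, -(t * W k j) * (Smat W ρ0)⁻¹ j l)
            * Smat W ρ0 l i := by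
    conv_rhs => rw [Finset.mul_sum, Finset.mul_sum, Finset.mul_sum,
      ← Finset.sum_add_distrib, ← Finset.sum_add_distrib]
    refine Finset.sum_congr rfl fun l _ => ?_
    rw [wIdef]; ring
  rw [hsplit, sum_S_sq hW ρ0 i, sum_S_W hW ρ0 i, sum_G_S ρ0 t hdet hW i]
  have hpos : (0:ℝ) < 1 + ρ0 ^ 2 * cW W i := by
    have := StS_base_pos (W := W) ρ0 i
    simpa [cW] using this
  have hDD : DD W ρ0 i * (1 + ρ0 ^ 2 * cW W i) = 1 :=
    inv_mul_cancel₀ (ne_of_gt hpos)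
  rw [DDd]
  linear_combination (-(4 * ρ0 * t * cW W i * (DD W ρ0 i) ^ 2)) * hDD

end Aux6

theorem statement_11
    {Ωs : Type*} [MeasurableSpace Ωs] (μ : Measure Ωs) [IsProbabilityMeasure μ]
    (N p1 p2 : ℕ) (hN : 0 < N) (hp1 : 0 < p1) (hp2 : 0 < p2)
    (W : Matrix (Fin N) (Fin N) ℝ) (hW : ∀ i, W i i = 0)
    (X : Matrix (Fin N) (Fin p1 ⊕ Fin p2) ℝ)
    (ρ0 : ℝ) (β0 : Fin p1 ⊕ Fin p2 → ℝ) (σ02 lam2 lamx2 : ℝ)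
    (hσ : 0 < σ02) (hlam : 0 < lam2) (hlamx : 0 < lamx2)
    (hS0 : 0 < (Smat W ρ0).det)
    (E ε : Ωs → Fin N → ℝ) (Ex : Ωs → Fin N → Fin p2 → ℝ)
    (hindep : iIndepFun (noiseFam E ε Ex) μ)
    (hmom : ∀ z, MemLp (noiseFam E ε Ex z) 4 μ)
    (hmean : ∀ z, ∫ ω, noiseFam E ε Ex z ω ∂μ = 0)
    (hEvar : ∀ i, ∫ ω, (E ω i) ^ 2 ∂μ = σ02)
    (hepsvar : ∀ i, ∫ ω, (ε ω i) ^ 2 ∂μ = lam2)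
    (hExvar : ∀ i j, ∫ ω, (Ex ω i j) ^ 2 ∂μ = lamx2) :
    (∀ ω, DifferentiableAt ℝ
        (fun γ : ℝ × ((Fin p1 ⊕ Fin p2) → ℝ) =>
          lsObj W X (Ytrue W ρ0 X β0 (E ω)) γ.1 γ.2) (ρ0, β0)) ∧
      ∀ v : ℝ × ((Fin p1 ⊕ Fin p2) → ℝ),
        ∫ ω, fderiv ℝ
            (fun γ : ℝ × ((Fin p1 ⊕ Fin p2) → ℝ) =>
              lsObj W X (Ytrue W ρ0 X β0 (E ω)) γ.1 γ.2) (ρ0, β0) v ∂μ = 0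
  := by
  have hdet : IsUnit (Smat W ρ0).det := isUnit_iff_ne_zero.mpr (ne_of_gt hS0)
  have hE2 : ∀ k, MemLp (fun ω => E ω k) 2 μ := fun k =>
    (hmom (Sum.inl k)).mono_exponent (by norm_num)
  have hmean0 : ∀ k, ∫ ω, E ω k ∂μ = 0 := fun k => hmean (Sum.inl k)
  have hvar : ∀ k, ∫ ω, (E ω k) ^ 2 ∂μ = σ02 := hEvar
  have hpair : ∀ k l, k ≠ l → IndepFun (fun ω => E ω k) (fun ω => E ω l) μ := by
    intro k l hkl
    exact hindep.indepFun
      (show (Sum.inl k : Fin N ⊕ (Fin N ⊕ Fin N × Fin p2)) ≠ Sum.inl l by simpa using hkl)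
  constructor
  · intro ω
    exact differentiableAt_lsObj hW X (Ytrue W ρ0 X β0 (E ω)) ρ0 β0
  · intro v
    have hptw : ∀ ω, fderiv ℝ (fun γ : ℝ × ((Fin p1 ⊕ Fin p2) → ℝ) =>
        lsObj W X (Ytrue W ρ0 X β0 (E ω)) γ.1 γ.2) (ρ0, β0) v
        = ∑ i, (∑ k, Smat W ρ0 k i * E ω k) *
            (qIdef W X ρ0 β0 v.1 v.2 i + ∑ l, wIdef W ρ0 v.1 i l * E ω l) := by
      intro ω
      rw [fderiv_lsObj_apply hW X (Ytrue W ρ0 X β0 (E ω)) ρ0 β0 v,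
        gradLine_decomp hW ρ0 hdet X β0 v.1 v.2 (E ω)]
    rw [integral_congr_ae (Filter.Eventually.of_forall hptw)]
    rw [integral_finset_sum Finset.univ (fun i _ => integrable_quad hE2
      (fun k => Smat W ρ0 k i) (wIdef W ρ0 v.1 i) (qIdef W X ρ0 β0 v.1 v.2 i))]
    have hzero : ∀ i : Fin N, ∫ ω, (∑ k, Smat W ρ0 k i * E ω k) *
        (qIdef W X ρ0 β0 v.1 v.2 i + ∑ l, wIdef W ρ0 v.1 i l * E ω l) ∂μ = 0 := by
      intro i
      rw [integral_quad hE2 hmean0 hvar hpair]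
      rw [sum_vw_zero hW ρ0 v.1 hdet i, mul_zero]
    rw [Finset.sum_congr rfl fun i _ => hzero i]
    simp

end PSAR
end
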